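/- arXiv:2310.10588 — 10 statements merged into one kernel-verified Lean document; each statement's English description precedes it below -/
import Mathlib

section
/- For all w₁, w₂ > 0, setting z_i^n = n·D_i/w_i for i = 1, 2, one has lim_{n→∞} n·(1 − F₁₂(z₁^n, z₂^n)) = ℓ(w₁, w₂), where ℓ(w₁, w₂) = w₁·(∫ x₁h₁(x) dμ(x))/D₁ + w₂·(∫ x₂h₂(x) dμ(x))/D₂ + ∫ x₁₂·max{w₁h₁(x)/D₁, w₂h₂(x)/D₂} dμ(x). That is, ℓ is the stable upper tail-dependence function of the bivariate max-convolution distribution (Proposition 1 of the paper). -/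
open MeasureTheory Filter Real


lemma tendsto_n_one_sub_exp (c : ℝ) :
    Tendsto (fun n : ℕ => (n : ℝ) * (1 - Real.exp (-c / n))) atTop (nhds c) := by
  have hd : HasDerivAt (fun y : ℝ => Real.exp (-(c * y))) (-c) 0 := by
    have := (Real.hasDerivAt_exp (-(c * 0))).comp 0 (((hasDerivAt_id (0:ℝ)).const_mul c).neg)
    simpa [Function.comp_def] using this
  have hslope := hasDerivAt_iff_tendsto_slope.mp hd
  have hinv : Tendsto (fun n : ℕ => ((n : ℝ))⁻¹) atTop (nhdsWithin 0 {(0:ℝ)}ᶜ) := by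
    apply tendsto_nhdsWithin_of_tendsto_nhds_of_eventually_within
    · exact tendsto_inv_atTop_zero.comp tendsto_natCast_atTop_atTop
    · filter_upwards [eventually_ge_atTop 1] with n hn
      have hn0 : (0:ℝ) < (n:ℝ) := by exact_mod_cast Nat.lt_of_lt_of_le Nat.zero_lt_one hn
      simp [Set.mem_compl_iff, inv_ne_zero hn0.ne']
  have := (hslope.comp hinv).neg
  rw [neg_neg] at this
  apply this.congr'
  filter_upwards [eventually_ge_atTop 1] with n hn
  have hn0 : (0:ℝ) < (n:ℝ) := by exact_mod_cast Nat.lt_of_lt_of_le Nat.zero_lt_one hn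
  simp only [Function.comp_apply, slope_def_field]
  rw [mul_zero, neg_zero, Real.exp_zero, sub_zero, neg_div, div_eq_mul_inv]
  field_simp
  ring

/-- Proposition 1: the stable upper tail-dependence function of the bivariate
max-convolution distribution. -/
theorem stable_tail_dependence_function
    (μ : Measure (ℝ × ℝ × ℝ)) [IsProbabilityMeasure μ]
    (hsupp : ∀ᵐ x ∂μ, 0 < x.1 ∧ 0 < x.2.1 ∧ 0 < x.2.2)
    (h₁ h₂ : ℝ × ℝ × ℝ → ℝ) (hm1 : Measurable h₁) (hm2 : Measurable h₂)
    (hp1 : ∀ x, 0 < h₁ x) (hp2 : ∀ x, 0 < h₂ x)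
    (hi1 : Integrable (fun x => (x.1 + x.2.2) * h₁ x) μ)
    (hi2 : Integrable (fun x => (x.2.1 + x.2.2) * h₂ x) μ)
    (D₁ D₂ : ℝ)
    (hD1 : D₁ = ∫ x, (x.1 + x.2.2) * h₁ x ∂μ)
    (hD2 : D₂ = ∫ x, (x.2.1 + x.2.2) * h₂ x ∂μ)
    (hD1pos : 0 < D₁) (hD2pos : 0 < D₂)
    (F : ℝ → ℝ → ℝ)
    (hF : ∀ z₁ z₂ : ℝ, F z₁ z₂ =
      ∫ x, Real.exp (-(x.1 * h₁ x) / z₁ - (x.2.1 * h₂ x) / z₂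
        - x.2.2 * max (h₁ x / z₁) (h₂ x / z₂)) ∂μ)
    (w₁ w₂ : ℝ) (hw1 : 0 < w₁) (hw2 : 0 < w₂) :
    Tendsto (fun n : ℕ => (n : ℝ) * (1 - F ((n : ℝ) * D₁ / w₁) ((n : ℝ) * D₂ / w₂)))
      atTop
      (nhds (w₁ * (∫ x, x.1 * h₁ x ∂μ) / D₁ + w₂ * (∫ x, x.2.1 * h₂ x ∂μ) / D₂
        + ∫ x, x.2.2 * max (w₁ * h₁ x / D₁) (w₂ * h₂ x / D₂) ∂μ)) := by
  set G : ℝ × ℝ × ℝ → ℝ := fun x =>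
    (w₁ / D₁) * (x.1 * h₁ x) + (w₂ / D₂) * (x.2.1 * h₂ x)
      + x.2.2 * max (w₁ * h₁ x / D₁) (w₂ * h₂ x / D₂) with hGdef
  set B : ℝ × ℝ × ℝ → ℝ := fun x =>
    (w₁ / D₁) * ((x.1 + x.2.2) * h₁ x) + (w₂ / D₂) * ((x.2.1 + x.2.2) * h₂ x) with hBdef
  have hGmeas : Measurable G := by
    apply Measurable.add
    apply Measurable.add
    · exact (measurable_fst.mul hm1).const_mul _
    · exact ((measurable_snd.fst).mul hm2).const_mul _
    · exact (measurable_snd.snd).mul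
        (((hm1.const_mul w₁).div_const D₁).max ((hm2.const_mul w₂).div_const D₂))
  have hB : Integrable B μ := (hi1.const_mul _).add (hi2.const_mul _)
  -- a.e. facts
  have haefacts : ∀ᵐ x ∂μ, 0 ≤ G x ∧ G x ≤ B x := by
    filter_upwards [hsupp] with x ⟨hx1, hx2, hx12⟩
    have ha : 0 ≤ w₁ * h₁ x / D₁ := div_nonneg (mul_nonneg hw1.le (hp1 x).le) hD1pos.le
    have hb : 0 ≤ w₂ * h₂ x / D₂ := div_nonneg (mul_nonneg hw2.le (hp2 x).le) hD2pos.le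
    have hmax0 : 0 ≤ max (w₁ * h₁ x / D₁) (w₂ * h₂ x / D₂) := le_trans ha (le_max_left _ _)
    have hG0 : 0 ≤ G x := by
      have h1 := (hp1 x).le; have h2 := (hp2 x).le
      have : 0 ≤ x.2.2 * max (w₁ * h₁ x / D₁) (w₂ * h₂ x / D₂) := mul_nonneg hx12.le hmax0
      have t1 : 0 ≤ (w₁ / D₁) * (x.1 * h₁ x) :=
        mul_nonneg (div_nonneg hw1.le hD1pos.le) (mul_nonneg hx1.le h1)
      have t2 : 0 ≤ (w₂ / D₂) * (x.2.1 * h₂ x) :=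
        mul_nonneg (div_nonneg hw2.le hD2pos.le) (mul_nonneg hx2.le h2)
      simp only [hGdef]; linarith
    refine ⟨hG0, ?_⟩
    have hmle : max (w₁ * h₁ x / D₁) (w₂ * h₂ x / D₂) ≤ w₁ * h₁ x / D₁ + w₂ * h₂ x / D₂ :=
      max_le (le_add_of_nonneg_right hb) (le_add_of_nonneg_left ha)
    have := mul_le_mul_of_nonneg_left hmle hx12.le
    simp only [hGdef, hBdef]
    have e1 : (w₁ / D₁) * ((x.1 + x.2.2) * h₁ x)
        = (w₁ / D₁) * (x.1 * h₁ x) + x.2.2 * (w₁ * h₁ x / D₁) := by ring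
    have e2 : (w₂ / D₂) * ((x.2.1 + x.2.2) * h₂ x)
        = (w₂ / D₂) * (x.2.1 * h₂ x) + x.2.2 * (w₂ * h₂ x / D₂) := by ring
    rw [e1, e2]; linarith
  have hG : Integrable G μ := by
    refine hB.mono' hGmeas.aestronglyMeasurable ?_
    filter_upwards [haefacts] with x ⟨h0, hle⟩
    rw [Real.norm_eq_abs, abs_of_nonneg h0]; exact hle
  -- integrability of pieces
  have hg1 : Integrable (fun x => x.1 * h₁ x) μ := by
    refine hi1.mono' (measurable_fst.mul hm1).aestronglyMeasurable ?_
    filter_upwards [hsupp] with x ⟨hx1, hx2, hx12⟩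
    rw [Real.norm_eq_abs, abs_of_nonneg (mul_nonneg hx1.le (hp1 x).le)]
    nlinarith [(hp1 x).le, hx12.le]
  have hg2 : Integrable (fun x => x.2.1 * h₂ x) μ := by
    refine hi2.mono' ((measurable_snd.fst).mul hm2).aestronglyMeasurable ?_
    filter_upwards [hsupp] with x ⟨hx1, hx2, hx12⟩
    rw [Real.norm_eq_abs, abs_of_nonneg (mul_nonneg hx2.le (hp2 x).le)]
    nlinarith [(hp2 x).le, hx12.le]
  have hg3 : Integrable (fun x => x.2.2 * max (w₁ * h₁ x / D₁) (w₂ * h₂ x / D₂)) μ := by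
    have hmeas3 : Measurable (fun x : ℝ × ℝ × ℝ =>
        x.2.2 * max (w₁ * h₁ x / D₁) (w₂ * h₂ x / D₂)) :=
      (measurable_snd.snd).mul
        (((hm1.const_mul w₁).div_const D₁).max ((hm2.const_mul w₂).div_const D₂))
    have : (fun x => x.2.2 * max (w₁ * h₁ x / D₁) (w₂ * h₂ x / D₂))
        = fun x => G x - ((w₁ / D₁) * (x.1 * h₁ x) + (w₂ / D₂) * (x.2.1 * h₂ x)) := by
      funext x; simp only [hGdef]; ring
    rw [this]
    exact hG.sub ((hg1.const_mul _).add (hg2.const_mul _))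
  -- integral of G equals the target
  have hGint : ∫ x, G x ∂μ
      = w₁ * (∫ x, x.1 * h₁ x ∂μ) / D₁ + w₂ * (∫ x, x.2.1 * h₂ x ∂μ) / D₂
        + ∫ x, x.2.2 * max (w₁ * h₁ x / D₁) (w₂ * h₂ x / D₂) ∂μ := by
    simp only [hGdef]
    have hsum : Integrable (fun x : ℝ × ℝ × ℝ =>
        (w₁ / D₁) * (x.1 * h₁ x) + (w₂ / D₂) * (x.2.1 * h₂ x)) μ :=
      (hg1.const_mul _).add (hg2.const_mul _)
    have hA : Integrable (fun x : ℝ × ℝ × ℝ => (w₁ / D₁) * (x.1 * h₁ x)) μ := hg1.const_mul _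
    have hB2 : Integrable (fun x : ℝ × ℝ × ℝ => (w₂ / D₂) * (x.2.1 * h₂ x)) μ := hg2.const_mul _
    rw [integral_add hsum hg3, integral_add hA hB2, integral_const_mul, integral_const_mul]
    ring
  -- the sequence of integrands
  set f : ℕ → ℝ × ℝ × ℝ → ℝ := fun n x => (n : ℝ) * (1 - Real.exp (-G x / n)) with hfdef
  have hmain : Tendsto (fun n : ℕ => ∫ x, f n x ∂μ) atTop (nhds (∫ x, G x ∂μ)) := by
    apply tendsto_integral_filter_of_dominated_convergence B
    · filter_upwards with n
      exact (((hGmeas.neg.div_const _).exp.const_sub 1).const_mul _).aestronglyMeasurable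
    · filter_upwards [eventually_ge_atTop 1] with n hn
      filter_upwards [haefacts] with x ⟨h0, hle⟩
      have hn0 : (0:ℝ) < (n:ℝ) := by exact_mod_cast Nat.lt_of_lt_of_le Nat.zero_lt_one hn
      have hexple : Real.exp (-G x / n) ≤ 1 := by
        apply Real.exp_le_one_iff.mpr
        rw [neg_div]
        exact neg_nonpos.mpr (div_nonneg h0 hn0.le)
      have hexpge : 1 - Real.exp (-G x / n) ≤ G x / n := by
        have := Real.add_one_le_exp (-(G x / n))
        have : 1 - G x / n ≤ Real.exp (-(G x / n)) := by linarith
        rw [neg_div] at *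
        linarith
      have hf0 : 0 ≤ f n x := by
        apply mul_nonneg hn0.le
        linarith
      rw [Real.norm_eq_abs, abs_of_nonneg hf0]
      calc f n x ≤ (n : ℝ) * (G x / n) := by
            apply mul_le_mul_of_nonneg_left hexpge hn0.le
        _ = G x := by field_simp
        _ ≤ B x := hle
    · exact hB
    · filter_upwards with x
      exact tendsto_n_one_sub_exp (G x)
  rw [hGint] at hmain
  apply hmain.congr'
  filter_upwards [eventually_ge_atTop 1] with n hn
  have hn0 : (0:ℝ) < (n:ℝ) := by exact_mod_cast Nat.lt_of_lt_of_le Nat.zero_lt_one hn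
  -- rewrite F at the scaled arguments
  have hexp : ∀ x : ℝ × ℝ × ℝ,
      Real.exp (-(x.1 * h₁ x) / ((n : ℝ) * D₁ / w₁) - (x.2.1 * h₂ x) / ((n : ℝ) * D₂ / w₂)
        - x.2.2 * max (h₁ x / ((n : ℝ) * D₁ / w₁)) (h₂ x / ((n : ℝ) * D₂ / w₂)))
      = Real.exp (-G x / n) := by
    intro x
    congr 1
    have e1 : h₁ x / ((n : ℝ) * D₁ / w₁) = (w₁ * h₁ x / D₁) / n := by
      field_simp
    have e2 : h₂ x / ((n : ℝ) * D₂ / w₂) = (w₂ * h₂ x / D₂) / n := by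
      field_simp
    rw [e1, e2, max_div_div_right hn0.le]
    simp only [hGdef]
    field_simp
    ring
  have hFn : F ((n : ℝ) * D₁ / w₁) ((n : ℝ) * D₂ / w₂) = ∫ x, Real.exp (-G x / n) ∂μ := by
    rw [hF]; exact integral_congr_ae (Filter.Eventually.of_forall hexp)
  have hintexp : Integrable (fun x => Real.exp (-G x / n)) μ := by
    refine (integrable_const (1:ℝ)).mono'
      ((hGmeas.neg.div_const _).exp).aestronglyMeasurable ?_
    filter_upwards [haefacts] with x ⟨h0, _⟩
    rw [Real.norm_eq_abs, abs_of_nonneg (Real.exp_nonneg _)]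
    apply Real.exp_le_one_iff.mpr
    rw [neg_div]
    exact neg_nonpos.mpr (div_nonneg h0 hn0.le)
  rw [hFn]
  have : (1:ℝ) - ∫ x, Real.exp (-G x / n) ∂μ = ∫ x, (1 - Real.exp (-G x / n)) ∂μ := by
    rw [integral_sub (integrable_const 1) hintexp, integral_const]
    simp
  rw [this, ← integral_const_mul]
end

section
/- Let s₁, s₂ be points of the Euclidean plane ℝ² with ‖s₁ − s₂‖ = h, and let r₁, r₂ > 0 satisfy |r₁ − r₂| < h < r₁ + r₂. Then the Lebesgue area of B(s₁, r₁) ∩ B(s₂, r₂) equals r₁²·(φ₁ − (1/2)sin(2φ₁)) + r₂²·(φ₂ − (1/2)sin(2φ₂)), where φ₁ = arccos((h² + r₁² − r₂²)/(2hr₁)) and φ₂ = arccos((h² + r₂² − r₁²)/(2hr₂)). -/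
open MeasureTheory Metric Real

lemma ftc_sqrt (r a : ℝ) (hr : 0 < r) (ha1 : -r < a) (ha2 : a < r) :
    ∫ x in a..r, Real.sqrt (r ^ 2 - x ^ 2)
      = r ^ 2 * Real.arccos (a / r) / 2 - a * Real.sqrt (r ^ 2 - a ^ 2) / 2 := by
  set F : ℝ → ℝ := fun x => (x * Real.sqrt (r ^ 2 - x ^ 2) + r ^ 2 * Real.arcsin (x / r)) / 2
    with hF
  have hcont : ContinuousOn F (Set.Icc a r) := by
    apply Continuous.continuousOn
    continuity
  have hderiv : ∀ x ∈ Set.Ioo a r,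
      HasDerivWithinAt F (Real.sqrt (r ^ 2 - x ^ 2)) (Set.Ioi x) x := by
    intro x hx
    have hxr : -r < x := lt_of_le_of_lt ha1.le hx.1
    have hxr2 : x < r := hx.2
    have hpos : 0 < r ^ 2 - x ^ 2 := by nlinarith
    have hs : Real.sqrt (r ^ 2 - x ^ 2) ≠ 0 := by positivity
    have hspos : 0 < Real.sqrt (r ^ 2 - x ^ 2) := Real.sqrt_pos.2 hpos
    have h1 : HasDerivAt (fun x : ℝ => r ^ 2 - x ^ 2) (-(2 * x)) x := by
      simpa using ((hasDerivAt_pow 2 x).const_sub (r ^ 2))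
    have h2 : HasDerivAt (fun x : ℝ => Real.sqrt (r ^ 2 - x ^ 2))
        (-(2 * x) / (2 * Real.sqrt (r ^ 2 - x ^ 2))) x := h1.sqrt (by positivity)
    have h3 : HasDerivAt (fun x : ℝ => Real.arcsin (x / r)) (1 / Real.sqrt (1 - (x/r) ^ 2) * (1/r)) x := by
      have hne1 : x / r ≠ -1 := by
        intro hc; rw [div_eq_iff hr.ne'] at hc; nlinarith
      have hne2 : x / r ≠ 1 := by
        intro hc; rw [div_eq_iff hr.ne'] at hc; nlinarith
      exact (Real.hasDerivAt_arcsin hne1 hne2).comp x ((hasDerivAt_id x).div_const r)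
    have key : HasDerivAt F (Real.sqrt (r ^ 2 - x ^ 2)) x := by
      have h4 := (((hasDerivAt_id x).mul h2).add (h3.const_mul (r ^ 2))).div_const 2
      refine h4.congr_deriv (Eq.symm ?_)
      have hsq : Real.sqrt (1 - (x/r) ^ 2) = Real.sqrt (r ^ 2 - x ^ 2) / r := by
        rw [show (1 : ℝ) - (x/r)^2 = (r^2 - x^2)/r^2 by field_simp,
          Real.sqrt_div hpos.le, Real.sqrt_sq hr.le]
      rw [hsq]
      field_simp
      ring_nf
      rw [Real.sq_sqrt hpos.le, id_eq]
      ring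
    exact key.hasDerivWithinAt
  have hint : IntervalIntegrable (fun x => Real.sqrt (r ^ 2 - x ^ 2)) volume a r := by
    apply Continuous.intervalIntegrable; continuity
  rw [intervalIntegral.integral_eq_sub_of_hasDeriv_right_of_le ha2.le hcont hderiv hint]
  have h1 : F r = r ^ 2 * (π / 2) / 2 := by
    simp only [hF]
    rw [show r ^ 2 - r ^ 2 = 0 by ring, Real.sqrt_zero, div_self hr.ne', Real.arcsin_one]
    ring
  have h2 : F a = (a * Real.sqrt (r ^ 2 - a ^ 2) + r ^ 2 * Real.arcsin (a / r)) / 2 := rfl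
  rw [h1, h2, Real.arccos_eq_pi_div_two_sub_arcsin]
  ring

lemma segment_area (r a : ℝ) (hr : 0 < r) (ha1 : -r < a) (ha2 : a < r) :
    volume {p : ℝ × ℝ | p.1 ^ 2 + p.2 ^ 2 < r ^ 2 ∧ a < p.1}
      = ENNReal.ofReal (r ^ 2 * (Real.arccos (a / r)
          - (1/2) * Real.sin (2 * Real.arccos (a / r)))) := by
  have hset : {p : ℝ × ℝ | p.1 ^ 2 + p.2 ^ 2 < r ^ 2 ∧ a < p.1}
      = regionBetween (fun x => -Real.sqrt (r ^ 2 - x ^ 2))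
          (fun x => Real.sqrt (r ^ 2 - x ^ 2)) (Set.Ioo a r) := by
    ext ⟨x, y⟩
    simp only [Set.mem_setOf_eq, regionBetween, Set.mem_Ioo]
    constructor
    · rintro ⟨h1, h2⟩
      have hx2 : x ^ 2 < r ^ 2 := by nlinarith
      have hxr : x < r := by nlinarith
      have hy2 : y ^ 2 < r ^ 2 - x ^ 2 := by nlinarith
      have habs : |y| < Real.sqrt (r ^ 2 - x ^ 2) := by
        rw [← Real.sqrt_sq_eq_abs]
        exact Real.sqrt_lt_sqrt (sq_nonneg y) hy2
      exact ⟨⟨h2, hxr⟩, (abs_lt.mp habs).1, (abs_lt.mp habs).2⟩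
    · rintro ⟨⟨hax, hxr⟩, hy1, hy2⟩
      have habs : |y| < Real.sqrt (r ^ 2 - x ^ 2) := abs_lt.mpr ⟨hy1, hy2⟩
      have hy2' : y ^ 2 < r ^ 2 - x ^ 2 := by
        have := Real.sq_sqrt (show (0:ℝ) ≤ r ^ 2 - x ^ 2 by nlinarith)
        calc y ^ 2 = |y| ^ 2 := (sq_abs y).symm
        _ < Real.sqrt (r ^ 2 - x ^ 2) ^ 2 := by
            apply pow_lt_pow_left₀ habs (abs_nonneg y)
            norm_num
        _ = r ^ 2 - x ^ 2 := this
      exact ⟨by nlinarith, hax⟩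
  have hcont : Continuous fun x : ℝ => Real.sqrt (r ^ 2 - x ^ 2) := by continuity
  have hint : IntegrableOn (fun x => Real.sqrt (r ^ 2 - x ^ 2)) (Set.Ioo a r) volume :=
    (hcont.continuousOn.integrableOn_compact isCompact_Icc).mono_set Set.Ioo_subset_Icc_self
  have hle : ∀ x ∈ Set.Ioo a r, (fun x => -Real.sqrt (r ^ 2 - x ^ 2)) x
      ≤ (fun x => Real.sqrt (r ^ 2 - x ^ 2)) x := by
    intro x _
    simp only
    have := Real.sqrt_nonneg (r ^ 2 - x ^ 2)
    linarith
  rw [hset, MeasureTheory.Measure.volume_eq_prod,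
    volume_regionBetween_eq_integral (show IntegrableOn (fun x => -Real.sqrt (r ^ 2 - x ^ 2)) (Set.Ioo a r) volume from hint.neg) hint measurableSet_Ioo hle]
  have hIoo : ∫ x in Set.Ioo a r,
      ((fun x => Real.sqrt (r ^ 2 - x ^ 2)) - fun x => -Real.sqrt (r ^ 2 - x ^ 2)) x
      = 2 * (r ^ 2 * Real.arccos (a / r) / 2 - a * Real.sqrt (r ^ 2 - a ^ 2) / 2) := by
    rw [← MeasureTheory.integral_Ioc_eq_integral_Ioo,
      ← intervalIntegral.integral_of_le ha2.le]
    rw [show (((fun x => Real.sqrt (r ^ 2 - x ^ 2)) - fun x => -Real.sqrt (r ^ 2 - x ^ 2)))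
        = fun x => 2 * Real.sqrt (r ^ 2 - x ^ 2) by funext x; simp; ring]
    rw [intervalIntegral.integral_const_mul, ftc_sqrt r a hr ha1 ha2]
  rw [hIoo]
  congr 1
  have hd1 : -1 ≤ a / r := by rw [le_div_iff₀ hr]; linarith
  have hd2 : a / r ≤ 1 := by rw [div_le_iff₀ hr]; linarith
  rw [Real.sin_two_mul, Real.cos_arccos hd1 hd2, Real.sin_arccos]
  have hsq : Real.sqrt (1 - (a / r) ^ 2) = Real.sqrt (r ^ 2 - a ^ 2) / r := by
    rw [show (1 : ℝ) - (a / r) ^ 2 = (r ^ 2 - a ^ 2) / r ^ 2 by field_simp,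
      Real.sqrt_div (by nlinarith), Real.sqrt_sq hr.le]
  rw [hsq]
  field_simp

set_option maxHeartbeats 2000000 in
lemma lens_prod (h r₁ r₂ : ℝ) (hr1 : 0 < r₁) (hr2 : 0 < r₂)
    (hlow : |r₁ - r₂| < h) (hup : h < r₁ + r₂) :
    volume ({p : ℝ × ℝ | p.1 ^ 2 + p.2 ^ 2 < r₁ ^ 2}
        ∩ {p : ℝ × ℝ | (p.1 - h) ^ 2 + p.2 ^ 2 < r₂ ^ 2})
      = ENNReal.ofReal (r₁ ^ 2 * (Real.arccos (((h ^ 2 + r₁ ^ 2 - r₂ ^ 2) / (2 * h)) / r₁)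
            - (1/2) * Real.sin (2 * Real.arccos (((h ^ 2 + r₁ ^ 2 - r₂ ^ 2) / (2 * h)) / r₁))))
        + ENNReal.ofReal (r₂ ^ 2 * (Real.arccos (((h ^ 2 + r₂ ^ 2 - r₁ ^ 2) / (2 * h)) / r₂)
            - (1/2) * Real.sin (2 * Real.arccos (((h ^ 2 + r₂ ^ 2 - r₁ ^ 2) / (2 * h)) / r₂)))) := by
  have hh : 0 < h := lt_of_le_of_lt (abs_nonneg _) hlow
  have hl1 : r₁ - r₂ < h := lt_of_le_of_lt (le_abs_self _) hlow
  have hl2 : r₂ - r₁ < h := lt_of_le_of_lt (le_abs_self _) (by rwa [abs_sub_comm] at hlow)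
  set d : ℝ := (h ^ 2 + r₁ ^ 2 - r₂ ^ 2) / (2 * h) with hd
  set a₂ : ℝ := (h ^ 2 + r₂ ^ 2 - r₁ ^ 2) / (2 * h) with ha₂
  have hda : d + a₂ = h := by rw [hd, ha₂]; field_simp; ring
  have h2hd : 2 * h * d = h ^ 2 + r₁ ^ 2 - r₂ ^ 2 := by rw [hd]; field_simp
  have h2ha : 2 * h * a₂ = h ^ 2 + r₂ ^ 2 - r₁ ^ 2 := by rw [ha₂]; field_simp
  have h2hpos : (0:ℝ) < 2 * h := by linarith
  have hd1 : -r₁ < d := by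
    have key : 2 * h * -r₁ < 2 * h * d := by
      nlinarith [mul_pos (show (0:ℝ) < h + r₁ - r₂ by linarith)
        (show (0:ℝ) < h + r₁ + r₂ by linarith)]
    exact (mul_lt_mul_iff_right₀ h2hpos).mp key
  have hd2 : d < r₁ := by
    have key : 2 * h * d < 2 * h * r₁ := by
      nlinarith [mul_pos (show (0:ℝ) < r₂ - (h - r₁) by linarith)
        (show (0:ℝ) < r₂ + (h - r₁) by linarith)]
    exact (mul_lt_mul_iff_right₀ h2hpos).mp key
  have ha1 : -r₂ < a₂ := by
    have key : 2 * h * -r₂ < 2 * h * a₂ := by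
      nlinarith [mul_pos (show (0:ℝ) < h + r₂ - r₁ by linarith)
        (show (0:ℝ) < h + r₂ + r₁ by linarith)]
    exact (mul_lt_mul_iff_right₀ h2hpos).mp key
  have ha2' : a₂ < r₂ := by
    have key : 2 * h * a₂ < 2 * h * r₂ := by
      nlinarith [mul_pos (show (0:ℝ) < r₁ - (h - r₂) by linarith)
        (show (0:ℝ) < r₁ + (h - r₂) by linarith)]
    exact (mul_lt_mul_iff_right₀ h2hpos).mp key
  set D₁ : Set (ℝ × ℝ) := {p | p.1 ^ 2 + p.2 ^ 2 < r₁ ^ 2} with hD₁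
  set D₂ : Set (ℝ × ℝ) := {p | (p.1 - h) ^ 2 + p.2 ^ 2 < r₂ ^ 2} with hD₂
  set A : Set (ℝ × ℝ) := {p | (p.1 - h) ^ 2 + p.2 ^ 2 < r₂ ^ 2 ∧ p.1 < d} with hA
  set B : Set (ℝ × ℝ) := {p | p.1 ^ 2 + p.2 ^ 2 < r₁ ^ 2 ∧ d < p.1} with hB
  set L : Set (ℝ × ℝ) := {p | p.1 = d} with hL
  -- L is null
  have hLnull : volume L = 0 := by
    have : L = ({d} : Set ℝ) ×ˢ (Set.univ : Set ℝ) := by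
      ext ⟨x, y⟩; simp [hL, eq_comm]
    rw [this, MeasureTheory.Measure.volume_eq_prod, Measure.prod_prod]
    simp
  have hmeasA : MeasurableSet A := by
    have : IsOpen A := by
      rw [show A = {p : ℝ × ℝ | (p.1 - h) ^ 2 + p.2 ^ 2 < r₂ ^ 2} ∩ {p | p.1 < d} from rfl]
      apply IsOpen.inter
      · exact isOpen_lt (by continuity) continuous_const
      · exact isOpen_lt continuous_fst continuous_const
    exact this.measurableSet
  have hmeasB : MeasurableSet B := by
    have : IsOpen B := by
      rw [show B = {p : ℝ × ℝ | p.1 ^ 2 + p.2 ^ 2 < r₁ ^ 2} ∩ {p | d < p.1} from rfl]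
      apply IsOpen.inter
      · exact isOpen_lt (by continuity) continuous_const
      · exact isOpen_lt continuous_const continuous_fst
    exact this.measurableSet
  -- split
  have hsplit : (D₁ ∩ D₂) \ L = A ∪ B := by
    ext p
    simp only [hD₁, hD₂, hA, hB, hL, Set.mem_diff, Set.mem_inter_iff, Set.mem_setOf_eq,
      Set.mem_union]
    constructor
    · rintro ⟨⟨h1, h2⟩, h3⟩
      rcases lt_or_gt_of_ne h3 with hlt | hgt
      · exact Or.inl ⟨h2, hlt⟩
      · exact Or.inr ⟨h1, hgt⟩
    · rintro (⟨h1, h2⟩ | ⟨h1, h2⟩)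
      · exact ⟨⟨by nlinarith [mul_pos hh (sub_pos.2 h2), h2hd], h1⟩, ne_of_lt h2⟩
      · exact ⟨⟨h1, by nlinarith [mul_pos hh (sub_pos.2 h2), h2hd]⟩, ne_of_gt h2⟩
  have hdisj : Disjoint A B := by
    rw [Set.disjoint_iff]
    rintro p ⟨⟨_, h1⟩, ⟨_, h2⟩⟩
    exact absurd (h1.trans h2) (lt_irrefl _)
  have hvol : volume (D₁ ∩ D₂) = volume A + volume B := by
    rw [← measure_diff_null hLnull, hsplit, measure_union hdisj hmeasB]
  -- volume of B by segment_area
  have hvolB : volume B = ENNReal.ofReal (r₁ ^ 2 * (Real.arccos (d / r₁)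
      - (1/2) * Real.sin (2 * Real.arccos (d / r₁)))) := segment_area r₁ d hr1 hd1 hd2
  -- volume of A via reflection
  have hrefl : MeasurePreserving (fun x : ℝ => h - x) volume volume := by
    have := (measurePreserving_add_right (volume : Measure ℝ) h).comp
      (Measure.measurePreserving_neg (volume : Measure ℝ))
    simpa [Function.comp_def, sub_eq_neg_add] using this
  have hρ : MeasurePreserving (Prod.map (fun x : ℝ => h - x) (id : ℝ → ℝ))
      (volume : Measure (ℝ × ℝ)) volume := by
    rw [MeasureTheory.Measure.volume_eq_prod]
    exact hrefl.prod (MeasurePreserving.id volume)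
  have hApre : A = (Prod.map (fun x : ℝ => h - x) (id : ℝ → ℝ)) ⁻¹'
      {p : ℝ × ℝ | p.1 ^ 2 + p.2 ^ 2 < r₂ ^ 2 ∧ a₂ < p.1} := by
    ext p
    simp only [hA, Set.mem_preimage, Prod.map, id_eq, Set.mem_setOf_eq]
    constructor
    · rintro ⟨h1, h2⟩
      exact ⟨by nlinarith [h1], by linarith⟩
    · rintro ⟨h1, h2⟩
      exact ⟨by nlinarith [h1], by linarith⟩
  have hvolA : volume A = ENNReal.ofReal (r₂ ^ 2 * (Real.arccos (a₂ / r₂)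
      - (1/2) * Real.sin (2 * Real.arccos (a₂ / r₂)))) := by
    rw [hApre, hρ.measure_preimage]
    · exact segment_area r₂ a₂ hr2 ha1 ha2'
    · apply MeasurableSet.nullMeasurableSet
      have : IsOpen {p : ℝ × ℝ | p.1 ^ 2 + p.2 ^ 2 < r₂ ^ 2 ∧ a₂ < p.1} := by
        have : {p : ℝ × ℝ | p.1 ^ 2 + p.2 ^ 2 < r₂ ^ 2 ∧ a₂ < p.1}
            = {p : ℝ × ℝ | p.1 ^ 2 + p.2 ^ 2 < r₂ ^ 2} ∩ {p | a₂ < p.1} := rfl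
        rw [this]
        apply IsOpen.inter
        · exact isOpen_lt (by continuity) continuous_const
        · exact isOpen_lt continuous_const continuous_fst
      exact this.measurableSet
  rw [hvol, hvolA, hvolB, add_comm]

lemma seg_nonneg (r t : ℝ) :
    0 ≤ r ^ 2 * (Real.arccos t - (1/2) * Real.sin (2 * Real.arccos t)) := by
  have h1 : 0 ≤ Real.arccos t := Real.arccos_nonneg t
  have h2 : Real.sin (2 * Real.arccos t) ≤ 2 * Real.arccos t := Real.sin_le (by linarith)
  have := sq_nonneg r
  nlinarith


set_option maxHeartbeats 1000000 in
/-- The lens-area formula: for two overlapping disks in the Euclidean plane whose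
centers are at distance `h` with `|r₁ - r₂| < h < r₁ + r₂`, the area of their
intersection is `r₁²(φ₁ - sin(2φ₁)/2) + r₂²(φ₂ - sin(2φ₂)/2)` with the angles `φᵢ`
given by the arccosines below. -/
theorem lens_area_formula
    (s₁ s₂ : EuclideanSpace ℝ (Fin 2)) (h r₁ r₂ : ℝ)
    (hd : dist s₁ s₂ = h) (hr1 : 0 < r₁) (hr2 : 0 < r₂)
    (hlow : |r₁ - r₂| < h) (hup : h < r₁ + r₂) :
    volume (ball s₁ r₁ ∩ ball s₂ r₂)
      = ENNReal.ofReal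
        (r₁ ^ 2 * (Real.arccos ((h ^ 2 + r₁ ^ 2 - r₂ ^ 2) / (2 * h * r₁))
            - (1 / 2) * Real.sin (2 * Real.arccos ((h ^ 2 + r₁ ^ 2 - r₂ ^ 2) / (2 * h * r₁))))
          + r₂ ^ 2 * (Real.arccos ((h ^ 2 + r₂ ^ 2 - r₁ ^ 2) / (2 * h * r₂))
            - (1 / 2) * Real.sin (2 * Real.arccos ((h ^ 2 + r₂ ^ 2 - r₁ ^ 2) / (2 * h * r₂))))) := by
  have hh : 0 < h := lt_of_le_of_lt (abs_nonneg _) hlow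
  set v : EuclideanSpace ℝ (Fin 2) := EuclideanSpace.single 0 h with hv
  have hv0 : v 0 = h := by rw [hv, EuclideanSpace.single_apply]; simp
  have hv1 : v 1 = 0 := by rw [hv, EuclideanSpace.single_apply]; norm_num
  have hnorm : ‖s₂ - s₁‖ = ‖v‖ := by
    rw [hv, EuclideanSpace.norm_single, Real.norm_eq_abs, abs_of_pos hh,
      ← dist_eq_norm, dist_comm, hd]
  set e := Submodule.reflection (ℝ ∙ ((s₂ - s₁) - v))ᗮ with he_def
  have he : e (s₂ - s₁) = v := Submodule.reflection_sub hnorm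
  set T : EuclideanSpace ℝ (Fin 2) → EuclideanSpace ℝ (Fin 2) := fun p => e (p - s₁) with hT_def
  have hT : MeasurePreserving T volume volume :=
    e.measurePreserving.comp (measurePreserving_sub_right volume s₁)
  have hball1 : ball s₁ r₁ = T ⁻¹' ball (0 : EuclideanSpace ℝ (Fin 2)) r₁ := by
    ext p
    simp only [mem_ball, Set.mem_preimage, hT_def]
    rw [dist_eq_norm, dist_eq_norm, sub_zero, e.norm_map]
  have hball2 : ball s₂ r₂ = T ⁻¹' ball v r₂ := by
    ext p
    simp only [mem_ball, Set.mem_preimage, hT_def]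
    rw [dist_eq_norm, dist_eq_norm, ← he, ← e.map_sub, e.norm_map,
      show p - s₁ - (s₂ - s₁) = p - s₂ by abel]
  rw [hball1, hball2, ← Set.preimage_inter,
    hT.measure_preimage ((measurableSet_ball.inter measurableSet_ball).nullMeasurableSet)]
  -- transfer to ℝ × ℝ
  set ψ : EuclideanSpace ℝ (Fin 2) → ℝ × ℝ :=
    (MeasurableEquiv.finTwoArrow : (Fin 2 → ℝ) ≃ᵐ ℝ × ℝ) ∘
      (MeasurableEquiv.toLp 2 (Fin 2 → ℝ)).symm with hψ_def
  have hψ : MeasurePreserving ψ volume volume :=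
    (volume_preserving_finTwoArrow ℝ).comp
      (EuclideanSpace.volume_preserving_symm_measurableEquiv_toLp (Fin 2))
  have hψapp : ∀ p : EuclideanSpace ℝ (Fin 2), ψ p = (p 0, p 1) := fun p => rfl
  have hset : ball (0 : EuclideanSpace ℝ (Fin 2)) r₁ ∩ ball v r₂
      = ψ ⁻¹' ({p : ℝ × ℝ | p.1 ^ 2 + p.2 ^ 2 < r₁ ^ 2}
          ∩ {p : ℝ × ℝ | (p.1 - h) ^ 2 + p.2 ^ 2 < r₂ ^ 2}) := by
    ext p
    simp only [Set.mem_inter_iff, mem_ball, Set.mem_preimage, hψapp, Set.mem_setOf_eq]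
    have hdist1 : dist p 0 = Real.sqrt ((p 0) ^ 2 + (p 1) ^ 2) := by
      rw [EuclideanSpace.dist_eq, Fin.sum_univ_two]
      congr 1 <;> simp [Real.dist_eq, sq_abs]
    have hdist2 : dist p v = Real.sqrt ((p 0 - h) ^ 2 + (p 1) ^ 2) := by
      rw [EuclideanSpace.dist_eq, Fin.sum_univ_two, hv0, hv1]
      congr 1 <;> simp [Real.dist_eq, sq_abs]
    rw [hdist1, hdist2, Real.sqrt_lt' hr1, Real.sqrt_lt' hr2]
  rw [hset, hψ.measure_preimage]
  · rw [lens_prod h r₁ r₂ hr1 hr2 hlow hup,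
      div_div, div_div, ← ENNReal.ofReal_add (seg_nonneg _ _) (seg_nonneg _ _)]
  · apply MeasurableSet.nullMeasurableSet
    apply MeasurableSet.inter
    · exact (isOpen_lt (by continuity) continuous_const).measurableSet
    · exact (isOpen_lt (by continuity) continuous_const).measurableSet
end

section
/- Let μ be a probability measure on a measurable space and let m be a measurable function with 0 ≤ m ≤ 1 μ-almost everywhere. Then lim_{u→1⁻} (1 − 2u + ∫ u^{2−m} dμ)/(1 − u) = ∫ m dμ. (This identifies the upper tail-dependence coefficient λ_U of the mixture copula whose diagonal is C(u, u) = ∫ u^{2−min{δ₁,δ₂}} dμ as λ_U = ∫ min{δ₁, δ₂} dμ, as in equation (eq-lam-srho) of the paper with m = min{δ₁, δ₂}.) -/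
open MeasureTheory Filter Real

/-- pointwise limit -/
lemma ptwise (c : ℝ) (hc0 : 0 ≤ c) (hc1 : c ≤ 1) :
    Tendsto (fun u : ℝ => (1 - 2 * u + u ^ (2 - c)) / (1 - u))
      (nhdsWithin 1 (Set.Iio 1)) (nhds c) := by
  have hd : HasDerivAt (fun u : ℝ => 1 - 2 * u + u ^ (2 - c)) (-c) 1 := by
    have h1 : HasDerivAt (fun u : ℝ => u ^ (2 - c)) ((2 - c) * (1:ℝ) ^ (2 - c - 1)) 1 :=
      Real.hasDerivAt_rpow_const (Or.inr (by linarith))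
    have h2 : HasDerivAt (fun u : ℝ => 1 - 2 * u) (-2) 1 := by
      simpa using ((hasDerivAt_id (1:ℝ)).const_mul 2).const_sub 1
    have := h2.add h1
    simpa [Real.one_rpow, Pi.add_def] using this.congr_deriv (by ring_nf; rw [Real.one_rpow]; ring)
  have hs := hasDerivAt_iff_tendsto_slope.mp hd
  have hmono : nhdsWithin (1:ℝ) (Set.Iio 1) ≤ nhdsWithin 1 {(1:ℝ)}ᶜ :=
    nhdsWithin_mono 1 (fun x hx => ne_of_lt hx)
  have := (hs.mono_left hmono).neg
  rw [neg_neg] at this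
  refine this.congr' ?_
  filter_upwards [self_mem_nhdsWithin] with u hu
  have hu1 : u ≠ 1 := ne_of_lt hu
  rw [slope_def_field]
  have : (1:ℝ) - 2 * 1 + (1:ℝ) ^ (2 - c) = 0 := by rw [Real.one_rpow]; ring
  rw [this, sub_zero, show (1:ℝ)-u = -(u-1) by ring, div_neg]

/-- The upper tail-dependence coefficient of the mixture copula with diagonal
`C(u,u) = ∫ u^{2-m} dμ`: one has `(1 - 2u + ∫ u^{2-m} dμ)/(1-u) → ∫ m dμ` as `u → 1⁻`. -/
theorem mixture_copula_upper_tail_coefficient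
    {α : Type*} [MeasurableSpace α] (μ : Measure α) [IsProbabilityMeasure μ]
    (m : α → ℝ) (hm : Measurable m) (h01 : ∀ᵐ x ∂μ, 0 ≤ m x ∧ m x ≤ 1) :
    Tendsto (fun u : ℝ => (1 - 2 * u + ∫ x, u ^ (2 - m x) ∂μ) / (1 - u))
      (nhdsWithin 1 (Set.Iio 1)) (nhds (∫ x, m x ∂μ)) := by
  have hIoo : ∀ᶠ u in nhdsWithin (1:ℝ) (Set.Iio 1), u ∈ Set.Ioo (0:ℝ) 1 := by
    filter_upwards [self_mem_nhdsWithin,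
      eventually_nhdsWithin_of_eventually_nhds (eventually_gt_nhds one_pos)] with u h1 h2
    exact ⟨h2, h1⟩
  have hmeas : ∀ u : ℝ, 0 < u → Measurable fun x => u ^ (2 - m x) := by
    intro u hu
    have hc : Continuous fun t : ℝ => u ^ t := by
      simp only [Real.rpow_def_of_pos hu]
      exact Real.continuous_exp.comp (continuous_const.mul continuous_id)
    exact hc.measurable.comp (measurable_const.sub hm)
  have key : Tendsto (fun u : ℝ => ∫ x, (1 - 2 * u + u ^ (2 - m x)) / (1 - u) ∂μ)
      (nhdsWithin 1 (Set.Iio 1)) (nhds (∫ x, m x ∂μ)) := by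
    apply tendsto_integral_filter_of_dominated_convergence (fun _ => (1:ℝ))
    · filter_upwards [hIoo] with u hu
      exact ((measurable_const.add (hmeas u hu.1)).div_const _).aestronglyMeasurable
    · filter_upwards [hIoo] with u hu
      filter_upwards [h01] with x hx
      obtain ⟨hu0, hu1⟩ := hu
      obtain ⟨hx0, hx1⟩ := hx
      have h1u : (0:ℝ) < 1 - u := by linarith
      have hupper : u ^ (2 - m x) ≤ u := by
        have := Real.rpow_le_rpow_of_exponent_ge hu0 hu1.le (by linarith : (1:ℝ) ≤ 2 - m x)
        simpa using this
      have hlower : u ^ (2:ℝ) ≤ u ^ (2 - m x) :=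
        Real.rpow_le_rpow_of_exponent_ge hu0 hu1.le (by linarith)
      have hsq : u ^ (2:ℝ) = u * u := by
        rw [show (2:ℝ) = ((2:ℕ):ℝ) by norm_num, Real.rpow_natCast]; ring
      rw [Real.norm_eq_abs, abs_div, abs_of_pos h1u, div_le_one h1u, abs_le]
      constructor
      · rw [hsq] at hlower
        nlinarith [sq_nonneg (1 - u)]
      · linarith [hupper]
    · exact integrable_const 1
    · filter_upwards [h01] with x hx
      exact ptwise (m x) hx.1 hx.2
  refine key.congr' ?_
  filter_upwards [hIoo] with u hu
  obtain ⟨hu0, hu1⟩ := hu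
  have hint : Integrable (fun x => u ^ (2 - m x)) μ := by
    refine (integrable_const (1:ℝ)).mono' (hmeas u hu0).aestronglyMeasurable ?_
    filter_upwards [h01] with x hx
    rw [Real.norm_eq_abs, abs_of_nonneg (Real.rpow_nonneg hu0.le _)]
    exact Real.rpow_le_one hu0.le hu1.le (by linarith [hx.2])
  rw [integral_div]
  congr 1
  rw [integral_add (integrable_const _) hint, integral_const]
  simp
end

section
/- Let s₁, s₂ ∈ ℝ² with ‖s₁ − s₂‖ = h > 0, let r_U > 0, and for radii r₁, r₂ ∈ (0, r_U] set δ_i(r₁, r₂; h) = A₁₂(r₁, r₂; h)/(π r_i²) for i = 1, 2, where A₁₂(r₁, r₂; h) is the Lebesgue area of B(s₁, r₁) ∩ B(s₂, r₂). Then min{δ₁(r₁, r₂; h), δ₂(r₁, r₂; h)} ≤ δ₁(r_U, r_U; h) = A₁₂(r_U, r_U; h)/(π r_U²). In particular, the supremum over (r₁, r₂) ∈ (0, r_U]² of min{δ₁, δ₂} is attained at r₁ = r₂ = r_U. -/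
open MeasureTheory Metric Real

/-- If `x` is in two balls of radius `R`, it is in the ball of radius `R` around any point
of the segment between the centers. -/
lemma mem_ball_segment {E : Type*} [NormedAddCommGroup E] [NormedSpace ℝ E]
    {a b x : E} {R t : ℝ} (ha : x ∈ ball a R) (hb : x ∈ ball b R)
    (ht0 : 0 ≤ t) (ht1 : t ≤ 1) : x ∈ ball (a + t • (b - a)) R := by
  rw [mem_ball, dist_eq_norm] at ha hb ⊢
  have key : x - (a + t • (b - a)) = (1 - t) • (x - a) + t • (x - b) := by
    simp [smul_sub, sub_smul]; abel
  calc ‖x - (a + t • (b - a))‖ = ‖(1 - t) • (x - a) + t • (x - b)‖ := by rw [key]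
    _ ≤ ‖(1 - t) • (x - a)‖ + ‖t • (x - b)‖ := norm_add_le _ _
    _ = (1 - t) * ‖x - a‖ + t * ‖x - b‖ := by
        rw [norm_smul, norm_smul, Real.norm_eq_abs, Real.norm_eq_abs,
          abs_of_nonneg (by linarith), abs_of_nonneg ht0]
    _ < R := by
        rcases lt_or_ge t 1 with h1 | h1
        · have h1' : (0:ℝ) < 1 - t := by linarith
          have hA := mul_lt_mul_of_pos_left ha h1'
          have hB := mul_le_mul_of_nonneg_left hb.le ht0
          nlinarith
        · have ht1' : t = 1 := le_antisymm ht1 h1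
          subst ht1'
          simpa using hb

/-- Image of a ball under the homothety `x ↦ k • (x - c₀) + c₀` with `k > 0`. -/
lemma image_homothety_ball {E : Type*} [NormedAddCommGroup E] [NormedSpace ℝ E]
    (c₀ c : E) {k ρ : ℝ} (hk : 0 < k) :
    (fun x => k • (x - c₀) + c₀) '' ball c ρ = ball (k • (c - c₀) + c₀) (k * ρ) := by
  ext y
  constructor
  · rintro ⟨x, hx, rfl⟩
    rw [mem_ball, dist_eq_norm] at hx ⊢
    have : k • (x - c₀) + c₀ - (k • (c - c₀) + c₀) = k • (x - c) := by
      rw [smul_sub, smul_sub, smul_sub]; abel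
    rw [this, norm_smul, Real.norm_eq_abs, abs_of_pos hk]
    exact mul_lt_mul_of_pos_left hx hk
  · intro hy
    refine ⟨k⁻¹ • (y - c₀) + c₀, ?_, ?_⟩
    · rw [mem_ball, dist_eq_norm] at hy ⊢
      have heq : k⁻¹ • (y - c₀) + c₀ - c = k⁻¹ • (y - (k • (c - c₀) + c₀)) := by
        match_scalars <;> field_simp <;> ring
      rw [heq, norm_smul, Real.norm_eq_abs, abs_of_pos (inv_pos.2 hk)]
      calc k⁻¹ * ‖y - (k • (c - c₀) + c₀)‖ < k⁻¹ * (k * ρ) :=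
            mul_lt_mul_of_pos_left hy (inv_pos.2 hk)
        _ = ρ := by field_simp
    · have : k • (k⁻¹ • (y - c₀) + c₀ - c₀) + c₀ = y := by
        match_scalars <;> field_simp <;> ring
      exact this

/-- Key scaling lemma: the normalized equal-radius lens area is monotone in the radius. -/
lemma lens_ratio_mono
    (s₁ s₂ : EuclideanSpace ℝ (Fin 2)) {r rU : ℝ} (hr : 0 < r) (hrrU : r ≤ rU) :
    (volume (ball s₁ r ∩ ball s₂ r)).toReal / (π * r ^ 2)
      ≤ (volume (ball s₁ rU ∩ ball s₂ rU)).toReal / (π * rU ^ 2) := by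
  have hrU : 0 < rU := lt_of_lt_of_le hr hrrU
  set k : ℝ := rU / r with hk_def
  have hk1 : 1 ≤ k := (one_le_div hr).2 hrrU
  have hk : 0 < k := lt_of_lt_of_le one_pos hk1
  have hkr : k * r = rU := by rw [hk_def]; field_simp
  set s₂' : EuclideanSpace ℝ (Fin 2) := k • (s₂ - s₁) + s₁ with hs₂'
  -- Step 1: scaling
  have himg : (fun x => k • (x - s₁) + s₁) '' (ball s₁ r ∩ ball s₂ r)
      = ball s₁ rU ∩ ball s₂' rU := by
    have hinj : Function.Injective (fun x : EuclideanSpace ℝ (Fin 2) => k • (x - s₁) + s₁) := by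
      intro a b hab
      simp only [add_left_inj] at hab
      have := smul_right_injective (EuclideanSpace ℝ (Fin 2)) hk.ne' hab
      exact sub_left_injective this
    rw [Set.image_inter hinj, image_homothety_ball s₁ s₁ hk, image_homothety_ball s₁ s₂ hk,
      hkr]
    have h0 : k • (s₁ - s₁) + s₁ = s₁ := by simp
    rw [h0, ← hs₂']
  have hscale : volume (ball s₁ rU ∩ ball s₂' rU)
      = ENNReal.ofReal (k ^ 2) * volume (ball s₁ r ∩ ball s₂ r) := by
    rw [← himg]
    have hfun : (fun x : EuclideanSpace ℝ (Fin 2) => k • (x - s₁) + s₁)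
        = fun x => AffineMap.homothety s₁ k x := by
      funext x
      simp [AffineMap.homothety_apply, vsub_eq_sub, vadd_eq_add]
    rw [hfun]
    rw [show (fun x : EuclideanSpace ℝ (Fin 2) => AffineMap.homothety s₁ k x)
        = AffineMap.homothety s₁ k from rfl]
    rw [Measure.addHaar_image_homothety]
    congr 1
    rw [finrank_euclideanSpace_fin, abs_of_pos (pow_pos hk 2)]
  -- Step 2: translation monotonicity
  set v : EuclideanSpace ℝ (Fin 2) := ((k - 1) / 2) • (s₂ - s₁) with hv
  have hsubset : ball s₁ rU ∩ ball s₂' rU ⊆ (v + ·) '' (ball s₁ rU ∩ ball s₂ rU) := by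
    intro x ⟨hx1, hx2⟩
    refine ⟨x - v, ⟨?_, ?_⟩, by simp⟩
    · have hmem := mem_ball_segment hx1 hx2 (t := (k - 1) / (2 * k))
        (div_nonneg (by linarith) (by positivity))
        (by rw [div_le_one (by positivity)]; linarith)
      have heq : s₁ + ((k - 1) / (2 * k)) • (s₂' - s₁) = s₁ + v := by
        rw [hs₂', hv]
        have h1 : k • (s₂ - s₁) + s₁ - s₁ = k • (s₂ - s₁) := by abel
        rw [h1, smul_smul]
        congr 2
        field_simp
      rw [heq] at hmem
      rw [mem_ball, dist_eq_norm] at hmem ⊢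
      convert hmem using 2
      abel
    · have hmem := mem_ball_segment hx1 hx2 (t := (k + 1) / (2 * k))
        (div_nonneg (by linarith) (by positivity))
        (by rw [div_le_one (by positivity)]; linarith)
      have heq : s₁ + ((k + 1) / (2 * k)) • (s₂' - s₁) = s₂ + v := by
        rw [hs₂', hv]
        have h1 : k • (s₂ - s₁) + s₁ - s₁ = k • (s₂ - s₁) := by abel
        rw [h1, smul_smul]
        have hc : (k + 1) / (2 * k) * k = (k - 1) / 2 + 1 := by field_simp; ring
        rw [hc, add_smul, one_smul]
        abel
      rw [heq] at hmem
      rw [mem_ball, dist_eq_norm] at hmem ⊢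
      convert hmem using 2
      abel
  have htrans : volume ((v + ·) '' (ball s₁ rU ∩ ball s₂ rU))
      = volume (ball s₁ rU ∩ ball s₂ rU) := by
    rw [Set.image_add_left]
    exact measure_preimage_add volume (-v) _
  have hmono : volume (ball s₁ rU ∩ ball s₂' rU) ≤ volume (ball s₁ rU ∩ ball s₂ rU) := by
    calc volume (ball s₁ rU ∩ ball s₂' rU) ≤ volume ((v + ·) '' (ball s₁ rU ∩ ball s₂ rU)) :=
          measure_mono hsubset
      _ = volume (ball s₁ rU ∩ ball s₂ rU) := htrans
  -- Step 3: combine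
  have hfin : volume (ball s₁ rU ∩ ball s₂ rU) < ⊤ :=
    lt_of_le_of_lt (measure_mono Set.inter_subset_left) measure_ball_lt_top
  have key : k ^ 2 * (volume (ball s₁ r ∩ ball s₂ r)).toReal
      ≤ (volume (ball s₁ rU ∩ ball s₂ rU)).toReal := by
    rw [hscale] at hmono
    have := ENNReal.toReal_mono hfin.ne hmono
    rwa [ENNReal.toReal_mul, ENNReal.toReal_ofReal (by positivity)] at this
  rw [div_le_div_iff₀ (by positivity) (by positivity)]
  have hk2 : k ^ 2 = rU ^ 2 / r ^ 2 := by rw [hk_def]; ring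
  calc (volume (ball s₁ r ∩ ball s₂ r)).toReal * (π * rU ^ 2)
      = (k ^ 2 * (volume (ball s₁ r ∩ ball s₂ r)).toReal) * (π * r ^ 2) := by
        rw [hk2]; field_simp
    _ ≤ (volume (ball s₁ rU ∩ ball s₂ rU)).toReal * (π * r ^ 2) :=
        mul_le_mul_of_nonneg_right key (by positivity)

/-- The overlap fractions `δᵢ(r₁,r₂;h) = A₁₂(r₁,r₂;h)/(π rᵢ²)` satisfy
`min{δ₁, δ₂} ≤ δ₁(r_U, r_U; h)` for all radii `r₁, r₂ ∈ (0, r_U]`; i.e. the supremum of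
`min{δ₁, δ₂}` over `(0, r_U]²` is attained at `r₁ = r₂ = r_U`. -/
theorem min_overlap_fraction_le
    (s₁ s₂ : EuclideanSpace ℝ (Fin 2)) (h rU : ℝ)
    (hd : dist s₁ s₂ = h) (hh : 0 < h) (hrU : 0 < rU)
    (r₁ r₂ : ℝ) (hr1 : r₁ ∈ Set.Ioc (0 : ℝ) rU) (hr2 : r₂ ∈ Set.Ioc (0 : ℝ) rU) :
    min ((volume (ball s₁ r₁ ∩ ball s₂ r₂)).toReal / (π * r₁ ^ 2))
        ((volume (ball s₁ r₁ ∩ ball s₂ r₂)).toReal / (π * r₂ ^ 2))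
      ≤ (volume (ball s₁ rU ∩ ball s₂ rU)).toReal / (π * rU ^ 2) := by
  obtain ⟨hr1p, hr1U⟩ := hr1
  obtain ⟨hr2p, hr2U⟩ := hr2
  set r : ℝ := max r₁ r₂ with hr_def
  have hrp : 0 < r := lt_max_of_lt_left hr1p
  have hrU' : r ≤ rU := max_le hr1U hr2U
  have hsub : ball s₁ r₁ ∩ ball s₂ r₂ ⊆ ball s₁ r ∩ ball s₂ r :=
    Set.inter_subset_inter (ball_subset_ball (le_max_left _ _))
      (ball_subset_ball (le_max_right _ _))
  have hvol : (volume (ball s₁ r₁ ∩ ball s₂ r₂)).toReal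
      ≤ (volume (ball s₁ r ∩ ball s₂ r)).toReal := by
    apply ENNReal.toReal_mono
    · exact (lt_of_le_of_lt (measure_mono Set.inter_subset_left) measure_ball_lt_top).ne
    · exact measure_mono hsub
  have step1 : min ((volume (ball s₁ r₁ ∩ ball s₂ r₂)).toReal / (π * r₁ ^ 2))
        ((volume (ball s₁ r₁ ∩ ball s₂ r₂)).toReal / (π * r₂ ^ 2))
      ≤ (volume (ball s₁ r ∩ ball s₂ r)).toReal / (π * r ^ 2) := by
    rcases max_cases r₁ r₂ with ⟨hmax, hle⟩ | ⟨hmax, hle⟩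
    · refine (min_le_left _ _).trans ?_
      rw [hr_def, hmax]
      gcongr
      exact (lt_of_le_of_lt (measure_mono Set.inter_subset_left) measure_ball_lt_top).ne
    · refine (min_le_right _ _).trans ?_
      rw [hr_def, hmax]
      gcongr
      exact (lt_of_le_of_lt (measure_mono Set.inter_subset_left) measure_ball_lt_top).ne
  exact step1.trans (lens_ratio_mono s₁ s₂ hrp hrU')
end

section
/- Let 0 ≤ r_L < r_U, h > 0, K₀ > 0, and let μ be a probability measure on ℝ² concentrated on {(r₁, r₂) : r_L ≤ r₁ ≤ r_U, r_L ≤ r₂ ≤ r_U, r₁ > 0, r₂ > 0} such that μ({(r₁, r₂) : |r₁ − r₂| > h}) ≥ K₀. Fix s₁, s₂ ∈ ℝ² with ‖s₁ − s₂‖ = h and set δ_i(r₁, r₂; h) = A₁₂(r₁, r₂; h)/(π r_i²), where A₁₂(r₁, r₂; h) is the Lebesgue area of B(s₁, r₁) ∩ B(s₂, r₂). Then λ_U(h) := ∫ min{δ₁(r₁, r₂; h), δ₂(r₁, r₂; h)} dμ(r₁, r₂) ≤ 1 − K₀·h·(2r_L + h)/r_U². (Proposition 2 of the paper.) -/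
open MeasureTheory Metric Real

lemma vol_ball_two (x : EuclideanSpace ℝ (Fin 2)) (r : ℝ) (hr : 0 ≤ r) :
    (volume (ball x r)).toReal = π * r ^ 2 := by
  rw [EuclideanSpace.volume_ball]
  have h1 : ((Fintype.card (Fin 2) : ℝ) / 2 + 1) = 2 := by norm_num
  rw [h1, Real.Gamma_two]
  simp only [Fintype.card_fin]
  rw [Real.sq_sqrt pi_pos.le]
  rw [← ENNReal.ofReal_pow hr, ← ENNReal.ofReal_mul (by positivity)]
  rw [ENNReal.toReal_ofReal (by positivity)]
  ring

/-- Proposition 2: if the joint law `μ` of the two random radii is concentrated on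
`[r_L, r_U]² ∩ (0,∞)²` and gives mass at least `K₀` to `{|r₁ - r₂| > h}`, then the
upper tail-dependence coefficient `λ_U(h) = ∫ min{δ₁, δ₂} dμ` satisfies
`λ_U(h) ≤ 1 - K₀ h (2 r_L + h)/r_U²`. -/
theorem lambdaU_upper_bound
    (s₁ s₂ : EuclideanSpace ℝ (Fin 2)) (h rL rU K₀ : ℝ)
    (hd : dist s₁ s₂ = h) (hh : 0 < h) (hrL : 0 ≤ rL) (hLU : rL < rU) (hK : 0 < K₀)
    (μ : Measure (ℝ × ℝ)) [IsProbabilityMeasure μ]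
    (hsupp : ∀ᵐ p ∂μ, 0 < p.1 ∧ 0 < p.2 ∧ rL ≤ p.1 ∧ p.1 ≤ rU ∧ rL ≤ p.2 ∧ p.2 ≤ rU)
    (hgap : ENNReal.ofReal K₀ ≤ μ {p : ℝ × ℝ | h < |p.1 - p.2|}) :
    (∫ p : ℝ × ℝ,
        min ((volume (ball s₁ p.1 ∩ ball s₂ p.2)).toReal / (π * p.1 ^ 2))
            ((volume (ball s₁ p.1 ∩ ball s₂ p.2)).toReal / (π * p.2 ^ 2)) ∂μ)
      ≤ 1 - K₀ * h * (2 * rL + h) / rU ^ 2 := by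
  set G : Set (ℝ × ℝ) := {p : ℝ × ℝ | h < |p.1 - p.2|} with hG
  have hGmeas : MeasurableSet G := by
    apply measurableSet_lt measurable_const
    exact (measurable_fst.sub measurable_snd).abs
  set c : ℝ := h * (2 * rL + h) / rU ^ 2 with hc
  have hrU : 0 < rU := lt_of_le_of_lt hrL hLU
  have hcpos : 0 < c := by positivity
  set g : ℝ × ℝ → ℝ := fun p => 1 - Set.indicator G (fun _ => c) p with hgdef
  have hgint : Integrable g μ := by
    exact (integrable_const 1).sub ((integrable_const c).indicator hGmeas)
  have key : ∀ᵐ p ∂μ, min ((volume (ball s₁ p.1 ∩ ball s₂ p.2)).toReal / (π * p.1 ^ 2))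
      ((volume (ball s₁ p.1 ∩ ball s₂ p.2)).toReal / (π * p.2 ^ 2)) ≤ g p := by
    filter_upwards [hsupp] with p hp
    obtain ⟨h1, h2, h3, h4, h5, h6⟩ := hp
    by_cases hpG : p ∈ G
    · -- |r₁ - r₂| > h : the smaller ball lies inside the larger one
      simp only [hgdef, Set.indicator_of_mem hpG]
      have main : ∀ a b : ℝ, 0 < a → a ≤ rU → rL ≤ b → h < a - b → b ^ 2 / a ^ 2 ≤ 1 - c := by
        intro a b ha haU hbL hab
        have h0 : 0 ≤ b := le_trans hrL hbL
        have h1 : h * (2 * rL + h) ≤ a ^ 2 - b ^ 2 := by nlinarith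
        have h2 : c ≤ (a ^ 2 - b ^ 2) / a ^ 2 := by
          rw [hc]
          exact div_le_div₀ (by nlinarith) h1 (by positivity) (by nlinarith)
        have h3 : b ^ 2 / a ^ 2 = 1 - (a ^ 2 - b ^ 2) / a ^ 2 := by
          field_simp
          ring
        linarith
      rcases lt_abs.mp (show h < |p.1 - p.2| from hpG) with hcase | hcase
      · -- p.1 > p.2 + h : ball s₂ p.2 ⊆ ball s₁ p.1
        have hsub : ball s₂ p.2 ⊆ ball s₁ p.1 := by
          apply ball_subset_ball'
          rw [dist_comm, hd]; linarith
        have hA : ball s₁ p.1 ∩ ball s₂ p.2 = ball s₂ p.2 := Set.inter_eq_right.mpr hsub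
        refine le_trans (min_le_left _ _) ?_
        rw [hA, vol_ball_two _ _ h2.le,
          mul_div_mul_left _ _ (ne_of_gt pi_pos)]
        exact main p.1 p.2 h1 h4 h5 (by linarith)
      · -- p.2 > p.1 + h : ball s₁ p.1 ⊆ ball s₂ p.2
        have hsub : ball s₁ p.1 ⊆ ball s₂ p.2 := by
          apply ball_subset_ball'
          rw [hd]; linarith
        have hA : ball s₁ p.1 ∩ ball s₂ p.2 = ball s₁ p.1 := Set.inter_eq_left.mpr hsub
        refine le_trans (min_le_right _ _) ?_
        rw [hA, vol_ball_two _ _ h1.le,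
          mul_div_mul_left _ _ (ne_of_gt pi_pos)]
        exact main p.2 p.1 h2 h6 h3 (by linarith)
    · simp only [hgdef, Set.indicator_of_notMem hpG, sub_zero]
      refine le_trans (min_le_left _ _) ?_
      rw [div_le_one (by positivity)]
      calc (volume (ball s₁ p.1 ∩ ball s₂ p.2)).toReal
          ≤ (volume (ball s₁ p.1)).toReal := by
            apply ENNReal.toReal_mono (measure_ball_lt_top).ne
            exact measure_mono Set.inter_subset_left
        _ = π * p.1 ^ 2 := vol_ball_two _ _ h1.le
  have hnonneg : ∀ᵐ p ∂μ, 0 ≤ min ((volume (ball s₁ p.1 ∩ ball s₂ p.2)).toReal / (π * p.1 ^ 2))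
      ((volume (ball s₁ p.1 ∩ ball s₂ p.2)).toReal / (π * p.2 ^ 2)) := by
    filter_upwards with p
    exact le_min (by positivity) (by positivity)
  have hle := integral_mono_of_nonneg hnonneg hgint key
  refine hle.trans ?_
  have hGvol : K₀ ≤ (μ G).toReal :=
    (ENNReal.ofReal_le_iff_le_toReal (measure_ne_top μ G)).mp hgap
  rw [hgdef, integral_sub (integrable_const 1) ((integrable_const c).indicator hGmeas)]
  rw [integral_const, integral_indicator_const _ hGmeas]
  simp only [measureReal_def, measure_univ, ENNReal.toReal_one, smul_eq_mul, one_mul, mul_one]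
  have : K₀ * h * (2 * rL + h) / rU ^ 2 = K₀ * c := by rw [hc]; ring
  rw [this]
  nlinarith [hGvol, hcpos]
end

section
/- Let β > 1, q ∈ (0, 1), a ≥ 0, b ≥ 0, and let Z₁, Z₂, Y₁, Y₂ be nonnegative random variables on a probability space such that the pair (Z₁, Z₂) is independent of the pair (Y₁, Y₂), and such that, as z → ∞: z·P(Z_i > z) → 1 for i = 1, 2; z^β·P(Y_i > z) → 1 for i = 1, 2; z·P(Z₁ > z, Z₂ > z) → a; and z^β·P(Y₁ > z, Y₂ > z) → b. Then z·P(max{qZ₁, (1−q)Y₁} > z, max{qZ₂, (1−q)Y₂} > z) → q·a as z → ∞. (Thus for β > 1 the max-mixture has the same upper tail-dependence coefficient as the max-convolution component: λ̃_U = λ_U^Z.) -/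
open MeasureTheory Filter Real ProbabilityTheory

/-- Marginal tail of a regularly varying (index `-β`, `β > 1`) variable, scaled by `c > 0`,
is negligible at rate `z`. -/
lemma aux_marginal_tail {Ω : Type*} [MeasurableSpace Ω] (P : Measure Ω) [IsProbabilityMeasure P]
    (β c : ℝ) (hβ : 1 < β) (hc : 0 < c) (Y : Ω → ℝ)
    (hY : Tendsto (fun z : ℝ => z ^ β * (P {ω | z < Y ω}).toReal) atTop (nhds 1)) :
    Tendsto (fun z : ℝ => z * (P {ω | z / c < Y ω}).toReal) atTop (nhds 0) := by
  have hdiv : Tendsto (fun z : ℝ => z / c) atTop atTop :=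
    Tendsto.atTop_div_const hc tendsto_id
  have h1 : Tendsto (fun z : ℝ => (z / c) ^ β * (P {ω | z / c < Y ω}).toReal) atTop (nhds 1) :=
    hY.comp hdiv
  have h0 : Tendsto (fun z : ℝ => z ^ (1 - β)) atTop (nhds 0) := by
    have := tendsto_rpow_neg_atTop (by linarith : 0 < β - 1)
    simpa [neg_sub] using this
  have hmain : Tendsto (fun z : ℝ =>
      (z ^ (1 - β) * c ^ β) * ((z / c) ^ β * (P {ω | z / c < Y ω}).toReal)) atTop (nhds 0) := by
    have := (h0.mul_const (c ^ β)).mul h1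
    simpa using this
  refine hmain.congr' ?_
  filter_upwards [eventually_gt_atTop (0 : ℝ)] with z hz
  have hzc : (z / c) ^ β = z ^ β / c ^ β := Real.div_rpow hz.le hc.le β
  have hzb : z ^ (1 - β) * z ^ β = z := by
    rw [← Real.rpow_add hz]
    norm_num
  have hcb : c ^ β ≠ 0 := (Real.rpow_pos_of_pos hc β).ne'
  rw [hzc]
  have key : z ^ (1 - β) * c ^ β * (z ^ β / c ^ β * (P {ω | z / c < Y ω}).toReal)
      = z ^ (1 - β) * z ^ β * (P {ω | z / c < Y ω}).toReal * (c ^ β / c ^ β) := by ring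
  rw [key, div_self hcb, mul_one, hzb]

/-- For `β > 1`, the max-mixture `max{q Zᵢ, (1-q) Yᵢ}` has the same upper
tail-dependence coefficient as the max-convolution component: its joint exceedance rate
satisfies `z P(both > z) → q a`. -/
theorem max_mixture_tail_dependence_beta_gt_one
    {Ω : Type*} [MeasurableSpace Ω] (P : Measure Ω) [IsProbabilityMeasure P]
    (β q a b : ℝ) (hβ : 1 < β) (hq : q ∈ Set.Ioo (0 : ℝ) 1) (ha : 0 ≤ a) (hb : 0 ≤ b)
    (Z₁ Z₂ Y₁ Y₂ : Ω → ℝ)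
    (hZ₁m : Measurable Z₁) (hZ₂m : Measurable Z₂) (hY₁m : Measurable Y₁) (hY₂m : Measurable Y₂)
    (hZ₁0 : ∀ ω, 0 ≤ Z₁ ω) (hZ₂0 : ∀ ω, 0 ≤ Z₂ ω) (hY₁0 : ∀ ω, 0 ≤ Y₁ ω) (hY₂0 : ∀ ω, 0 ≤ Y₂ ω)
    (hind : IndepFun (fun ω => (Z₁ ω, Z₂ ω)) (fun ω => (Y₁ ω, Y₂ ω)) P)
    (hZ₁ : Tendsto (fun z : ℝ => z * (P {ω | z < Z₁ ω}).toReal) atTop (nhds 1))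
    (hZ₂ : Tendsto (fun z : ℝ => z * (P {ω | z < Z₂ ω}).toReal) atTop (nhds 1))
    (hY₁ : Tendsto (fun z : ℝ => z ^ β * (P {ω | z < Y₁ ω}).toReal) atTop (nhds 1))
    (hY₂ : Tendsto (fun z : ℝ => z ^ β * (P {ω | z < Y₂ ω}).toReal) atTop (nhds 1))
    (hZJ : Tendsto (fun z : ℝ => z * (P {ω | z < Z₁ ω ∧ z < Z₂ ω}).toReal) atTop (nhds a))
    (hYJ : Tendsto (fun z : ℝ => z ^ β * (P {ω | z < Y₁ ω ∧ z < Y₂ ω}).toReal) atTop (nhds b)) :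
    Tendsto (fun z : ℝ => z * (P {ω | z < max (q * Z₁ ω) ((1 - q) * Y₁ ω)
        ∧ z < max (q * Z₂ ω) ((1 - q) * Y₂ ω)}).toReal) atTop (nhds (q * a)) := by
  obtain ⟨hq0, hq1⟩ := hq
  have hc : 0 < 1 - q := by linarith
  -- Lower bound function
  set L : ℝ → ℝ := fun z => z * (P {ω | z / q < Z₁ ω ∧ z / q < Z₂ ω}).toReal with hLdef
  have hL : Tendsto L atTop (nhds (q * a)) := by
    have hdiv : Tendsto (fun z : ℝ => z / q) atTop atTop :=
      Tendsto.atTop_div_const hq0 tendsto_id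
    have h1 : Tendsto (fun z : ℝ =>
        (z / q) * (P {ω | z / q < Z₁ ω ∧ z / q < Z₂ ω}).toReal) atTop (nhds a) := hZJ.comp hdiv
    have h2 := h1.const_mul q
    refine h2.congr fun z => ?_
    rw [hLdef]
    field_simp
  have hT₁ := aux_marginal_tail P β (1 - q) hβ hc Y₁ hY₁
  have hT₂ := aux_marginal_tail P β (1 - q) hβ hc Y₂ hY₂
  have hU : Tendsto (fun z : ℝ => L z + z * (P {ω | z / (1 - q) < Y₁ ω}).toReal
      + z * (P {ω | z / (1 - q) < Y₂ ω}).toReal) atTop (nhds (q * a)) := by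
    have := (hL.add hT₁).add hT₂
    simpa using this
  refine tendsto_of_tendsto_of_tendsto_of_le_of_le' hL hU ?_ ?_
  · filter_upwards [eventually_ge_atTop (0 : ℝ)] with z hz
    refine mul_le_mul_of_nonneg_left ?_ hz
    refine ENNReal.toReal_mono (measure_ne_top P _) (measure_mono ?_)
    rintro ω ⟨h1, h2⟩
    constructor
    · exact lt_max_of_lt_left (by rwa [← div_lt_iff₀' hq0])
    · exact lt_max_of_lt_left (by rwa [← div_lt_iff₀' hq0])
  · filter_upwards [eventually_ge_atTop (0 : ℝ)] with z hz
    have hsub : {ω | z < max (q * Z₁ ω) ((1 - q) * Y₁ ω)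
        ∧ z < max (q * Z₂ ω) ((1 - q) * Y₂ ω)} ⊆
        ({ω | z / q < Z₁ ω ∧ z / q < Z₂ ω} ∪ {ω | z / (1 - q) < Y₁ ω})
          ∪ {ω | z / (1 - q) < Y₂ ω} := by
      rintro ω ⟨h1, h2⟩
      rcases lt_max_iff.mp h1 with h1' | h1'
      · rcases lt_max_iff.mp h2 with h2' | h2'
        · exact Or.inl (Or.inl ⟨(div_lt_iff₀' hq0).mpr h1', (div_lt_iff₀' hq0).mpr h2'⟩)
        · exact Or.inr ((div_lt_iff₀' hc).mpr h2')
      · exact Or.inl (Or.inr ((div_lt_iff₀' hc).mpr h1'))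
    have hmeas : P {ω | z < max (q * Z₁ ω) ((1 - q) * Y₁ ω)
        ∧ z < max (q * Z₂ ω) ((1 - q) * Y₂ ω)} ≤
        P {ω | z / q < Z₁ ω ∧ z / q < Z₂ ω} + P {ω | z / (1 - q) < Y₁ ω}
          + P {ω | z / (1 - q) < Y₂ ω} := by
      refine (measure_mono hsub).trans ?_
      exact (measure_union_le _ _).trans (add_le_add_left (measure_union_le _ _) _)
    have hreal : (P {ω | z < max (q * Z₁ ω) ((1 - q) * Y₁ ω)
        ∧ z < max (q * Z₂ ω) ((1 - q) * Y₂ ω)}).toReal ≤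
        (P {ω | z / q < Z₁ ω ∧ z / q < Z₂ ω}).toReal
          + (P {ω | z / (1 - q) < Y₁ ω}).toReal
          + (P {ω | z / (1 - q) < Y₂ ω}).toReal := by
      have h := ENNReal.toReal_mono (by finiteness) hmeas
      rwa [ENNReal.toReal_add (by finiteness) (by finiteness),
        ENNReal.toReal_add (by finiteness) (by finiteness)] at h
    calc z * (P {ω | z < max (q * Z₁ ω) ((1 - q) * Y₁ ω)
        ∧ z < max (q * Z₂ ω) ((1 - q) * Y₂ ω)}).toReal
        ≤ z * ((P {ω | z / q < Z₁ ω ∧ z / q < Z₂ ω}).toReal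
          + (P {ω | z / (1 - q) < Y₁ ω}).toReal
          + (P {ω | z / (1 - q) < Y₂ ω}).toReal) := mul_le_mul_of_nonneg_left hreal hz
      _ = L z + z * (P {ω | z / (1 - q) < Y₁ ω}).toReal
          + z * (P {ω | z / (1 - q) < Y₂ ω}).toReal := by rw [hLdef]; ring
end

section
/- Let β = 1, q ∈ (0, 1), a ≥ 0, b ≥ 0, and let Z₁, Z₂, Y₁, Y₂ be nonnegative random variables on a probability space such that the pair (Z₁, Z₂) is independent of the pair (Y₁, Y₂), and such that, as z → ∞: z·P(Z_i > z) → 1 for i = 1, 2; z·P(Y_i > z) → 1 for i = 1, 2; z·P(Z₁ > z, Z₂ > z) → a; and z·P(Y₁ > z, Y₂ > z) → b. Then z·P(max{qZ₁, (1−q)Y₁} > z, max{qZ₂, (1−q)Y₂} > z) → q·a + (1−q)·b as z → ∞. (Thus for β = 1 the max-mixture has upper tail-dependence coefficient λ̃_U = q·λ_U^Z + (1−q)·λ_U^Y.) -/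
open MeasureTheory Filter Real ProbabilityTheory

/-- For `β = 1`, the max-mixture `max{q Zᵢ, (1-q) Yᵢ}` has upper tail-dependence
coefficient `q a + (1-q) b`: its joint exceedance rate satisfies
`z P(both > z) → q a + (1-q) b`. -/
theorem max_mixture_tail_dependence_beta_eq_one
    {Ω : Type*} [MeasurableSpace Ω] (P : Measure Ω) [IsProbabilityMeasure P]
    (q a b : ℝ) (hq : q ∈ Set.Ioo (0 : ℝ) 1) (ha : 0 ≤ a) (hb : 0 ≤ b)
    (Z₁ Z₂ Y₁ Y₂ : Ω → ℝ)
    (hZ₁m : Measurable Z₁) (hZ₂m : Measurable Z₂) (hY₁m : Measurable Y₁) (hY₂m : Measurable Y₂)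
    (hZ₁0 : ∀ ω, 0 ≤ Z₁ ω) (hZ₂0 : ∀ ω, 0 ≤ Z₂ ω) (hY₁0 : ∀ ω, 0 ≤ Y₁ ω) (hY₂0 : ∀ ω, 0 ≤ Y₂ ω)
    (hind : IndepFun (fun ω => (Z₁ ω, Z₂ ω)) (fun ω => (Y₁ ω, Y₂ ω)) P)
    (hZ₁ : Tendsto (fun z : ℝ => z * (P {ω | z < Z₁ ω}).toReal) atTop (nhds 1))
    (hZ₂ : Tendsto (fun z : ℝ => z * (P {ω | z < Z₂ ω}).toReal) atTop (nhds 1))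
    (hY₁ : Tendsto (fun z : ℝ => z * (P {ω | z < Y₁ ω}).toReal) atTop (nhds 1))
    (hY₂ : Tendsto (fun z : ℝ => z * (P {ω | z < Y₂ ω}).toReal) atTop (nhds 1))
    (hZJ : Tendsto (fun z : ℝ => z * (P {ω | z < Z₁ ω ∧ z < Z₂ ω}).toReal) atTop (nhds a))
    (hYJ : Tendsto (fun z : ℝ => z * (P {ω | z < Y₁ ω ∧ z < Y₂ ω}).toReal) atTop (nhds b)) :
    Tendsto (fun z : ℝ => z * (P {ω | z < max (q * Z₁ ω) ((1 - q) * Y₁ ω)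
        ∧ z < max (q * Z₂ ω) ((1 - q) * Y₂ ω)}).toReal) atTop
      (nhds (q * a + (1 - q) * b)) := by
  obtain ⟨hq0, hq1⟩ := hq
  have hq1' : (0:ℝ) < 1 - q := by linarith
  -- independence of the relevant coordinates
  have hZ1Y2 : IndepFun Z₁ Y₂ P := hind.comp measurable_fst measurable_snd
  have hY1Z2 : IndepFun Y₁ Z₂ P := hind.symm.comp measurable_fst measurable_snd
  -- factorization of cross probabilities
  have cross1 : ∀ s t : ℝ, P ({ω | s < Z₁ ω} ∩ {ω | t < Y₂ ω})
      = P {ω | s < Z₁ ω} * P {ω | t < Y₂ ω} := by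
    intro s t
    have := hZ1Y2.measure_inter_preimage_eq_mul (Set.Ioi s) (Set.Ioi t)
      measurableSet_Ioi measurableSet_Ioi
    simpa [Set.preimage, Set.Ioi] using this
  have cross2 : ∀ s t : ℝ, P ({ω | s < Y₁ ω} ∩ {ω | t < Z₂ ω})
      = P {ω | s < Y₁ ω} * P {ω | t < Z₂ ω} := by
    intro s t
    have := hY1Z2.measure_inter_preimage_eq_mul (Set.Ioi s) (Set.Ioi t)
      measurableSet_Ioi measurableSet_Ioi
    simpa [Set.preimage, Set.Ioi] using this
  -- scaling maps
  have hdivq : Tendsto (fun z : ℝ => z / q) atTop atTop := tendsto_id.atTop_div_const hq0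
  have hdivq' : Tendsto (fun z : ℝ => z / (1 - q)) atTop atTop := tendsto_id.atTop_div_const hq1'
  -- main joint terms
  have LZZ : Tendsto (fun z : ℝ => z * (P {ω | z/q < Z₁ ω ∧ z/q < Z₂ ω}).toReal)
      atTop (nhds (q * a)) := by
    have h := (hZJ.comp hdivq).const_mul q
    refine Tendsto.congr (fun z => ?_) h
    simp only [Function.comp]
    rw [← mul_assoc]
    congr 1
    field_simp
  have LYY : Tendsto (fun z : ℝ => z * (P {ω | z/(1-q) < Y₁ ω ∧ z/(1-q) < Y₂ ω}).toReal)
      atTop (nhds ((1 - q) * b)) := by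
    have h := (hYJ.comp hdivq').const_mul (1 - q)
    refine Tendsto.congr (fun z => ?_) h
    simp only [Function.comp]
    rw [← mul_assoc]
    congr 1
    field_simp
  -- cross terms vanish
  have LC1 : Tendsto (fun z : ℝ => z * (P ({ω | z/q < Z₁ ω} ∩ {ω | z/(1-q) < Y₂ ω})).toReal)
      atTop (nhds 0) := by
    have margZ : Tendsto (fun z : ℝ => (z/q) * (P {ω | z/q < Z₁ ω}).toReal) atTop (nhds 1) :=
      hZ₁.comp hdivq
    have margY : Tendsto (fun z : ℝ => (z/(1-q)) * (P {ω | z/(1-q) < Y₂ ω}).toReal)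
        atTop (nhds 1) := hY₂.comp hdivq'
    have hinv : Tendsto (fun z : ℝ => q * (1 - q) / z) atTop (nhds 0) :=
      Tendsto.div_atTop tendsto_const_nhds tendsto_id
    have key := hinv.mul (margZ.mul margY)
    rw [zero_mul] at key
    refine key.congr' ?_
    filter_upwards [eventually_gt_atTop (0:ℝ)] with z hz
    rw [cross1, ENNReal.toReal_mul]
    field_simp
  have LC2 : Tendsto (fun z : ℝ => z * (P ({ω | z/(1-q) < Y₁ ω} ∩ {ω | z/q < Z₂ ω})).toReal)
      atTop (nhds 0) := by
    have margY : Tendsto (fun z : ℝ => (z/(1-q)) * (P {ω | z/(1-q) < Y₁ ω}).toReal)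
        atTop (nhds 1) := hY₁.comp hdivq'
    have margZ : Tendsto (fun z : ℝ => (z/q) * (P {ω | z/q < Z₂ ω}).toReal) atTop (nhds 1) :=
      hZ₂.comp hdivq
    have hinv : Tendsto (fun z : ℝ => q * (1 - q) / z) atTop (nhds 0) :=
      Tendsto.div_atTop tendsto_const_nhds tendsto_id
    have key := hinv.mul (margY.mul margZ)
    rw [zero_mul] at key
    refine key.congr' ?_
    filter_upwards [eventually_gt_atTop (0:ℝ)] with z hz
    rw [cross2, ENNReal.toReal_mul]
    field_simp
  -- notation for the sets
  set A : ℝ → Set Ω := fun z => {ω | z < max (q * Z₁ ω) ((1 - q) * Y₁ ω)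
      ∧ z < max (q * Z₂ ω) ((1 - q) * Y₂ ω)} with hA
  set S : ℝ → Set Ω := fun z => {ω | z/q < Z₁ ω ∧ z/q < Z₂ ω} with hS
  set T : ℝ → Set Ω := fun z => {ω | z/(1-q) < Y₁ ω ∧ z/(1-q) < Y₂ ω} with hT
  set C1 : ℝ → Set Ω := fun z => {ω | z/q < Z₁ ω} ∩ {ω | z/(1-q) < Y₂ ω} with hC1
  set C2 : ℝ → Set Ω := fun z => {ω | z/(1-q) < Y₁ ω} ∩ {ω | z/q < Z₂ ω} with hC2
  -- membership description of A
  have hAmem : ∀ z : ℝ, ∀ ω, ω ∈ A z ↔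
      (z/q < Z₁ ω ∨ z/(1-q) < Y₁ ω) ∧ (z/q < Z₂ ω ∨ z/(1-q) < Y₂ ω) := by
    intro z ω
    simp only [hA, Set.mem_setOf_eq, lt_max_iff]
    constructor
    · rintro ⟨h1, h2⟩
      constructor
      · rcases h1 with h | h
        · exact Or.inl ((div_lt_iff₀ hq0).mpr (by linarith [mul_comm q (Z₁ ω)]))
        · exact Or.inr ((div_lt_iff₀ hq1').mpr (by linarith [mul_comm (1-q) (Y₁ ω)]))
      · rcases h2 with h | h
        · exact Or.inl ((div_lt_iff₀ hq0).mpr (by linarith [mul_comm q (Z₂ ω)]))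
        · exact Or.inr ((div_lt_iff₀ hq1').mpr (by linarith [mul_comm (1-q) (Y₂ ω)]))
    · rintro ⟨h1, h2⟩
      constructor
      · rcases h1 with h | h
        · exact Or.inl (by have := (div_lt_iff₀ hq0).mp h; linarith [mul_comm (Z₁ ω) q])
        · exact Or.inr (by have := (div_lt_iff₀ hq1').mp h; linarith [mul_comm (Y₁ ω) (1-q)])
      · rcases h2 with h | h
        · exact Or.inl (by have := (div_lt_iff₀ hq0).mp h; linarith [mul_comm (Z₂ ω) q])
        · exact Or.inr (by have := (div_lt_iff₀ hq1').mp h; linarith [mul_comm (Y₂ ω) (1-q)])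
  -- set inclusions
  have hsubU : ∀ z : ℝ, A z ⊆ (S z ∪ T z) ∪ (C1 z ∪ C2 z) := by
    intro z ω hω
    rw [hAmem z ω] at hω
    obtain ⟨h1 | h1, h2 | h2⟩ := hω
    · exact Or.inl (Or.inl ⟨h1, h2⟩)
    · exact Or.inr (Or.inl ⟨h1, h2⟩)
    · exact Or.inr (Or.inr ⟨h1, h2⟩)
    · exact Or.inl (Or.inr ⟨h1, h2⟩)
  have hsubL : ∀ z : ℝ, S z ∪ T z ⊆ A z := by
    intro z ω hω
    rw [hAmem z ω]
    rcases hω with ⟨h1, h2⟩ | ⟨h1, h2⟩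
    · exact ⟨Or.inl h1, Or.inl h2⟩
    · exact ⟨Or.inr h1, Or.inr h2⟩
  have hST : ∀ z : ℝ, S z ∩ T z ⊆ C1 z := by
    rintro z ω ⟨⟨h1, _⟩, ⟨_, h2⟩⟩
    exact ⟨h1, h2⟩
  have hTmeas : ∀ z : ℝ, MeasurableSet (T z) :=
    fun z => ((measurableSet_lt measurable_const hY₁m).inter
      (measurableSet_lt measurable_const hY₂m))
  -- real-valued measure inequalities
  have hne : ∀ s : Set Ω, P s ≠ ⊤ := fun s => measure_ne_top P s
  have hupper : ∀ z : ℝ, (P (A z)).toReal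
      ≤ (P (S z)).toReal + (P (T z)).toReal + (P (C1 z)).toReal + (P (C2 z)).toReal := by
    intro z
    have h : P (A z) ≤ P (S z) + P (T z) + (P (C1 z) + P (C2 z)) := by
      calc P (A z) ≤ P ((S z ∪ T z) ∪ (C1 z ∪ C2 z)) := measure_mono (hsubU z)
        _ ≤ P (S z ∪ T z) + P (C1 z ∪ C2 z) := measure_union_le _ _
        _ ≤ (P (S z) + P (T z)) + (P (C1 z) + P (C2 z)) :=
            add_le_add (measure_union_le _ _) (measure_union_le _ _)
    have h' := ENNReal.toReal_mono (by
      exact ENNReal.add_ne_top.mpr ⟨ENNReal.add_ne_top.mpr ⟨hne _, hne _⟩,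
        ENNReal.add_ne_top.mpr ⟨hne _, hne _⟩⟩) h
    rw [ENNReal.toReal_add (ENNReal.add_ne_top.mpr ⟨hne _, hne _⟩)
        (ENNReal.add_ne_top.mpr ⟨hne _, hne _⟩),
      ENNReal.toReal_add (hne _) (hne _), ENNReal.toReal_add (hne _) (hne _)] at h'
    linarith
  have hlower : ∀ z : ℝ, (P (S z)).toReal + (P (T z)).toReal - (P (C1 z)).toReal
      ≤ (P (A z)).toReal := by
    intro z
    have h : P (S z) + P (T z) ≤ P (A z) + P (C1 z) := by
      rw [← measure_union_add_inter (S z) (hTmeas z)]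
      exact add_le_add (measure_mono (hsubL z)) (measure_mono (hST z))
    have h' := ENNReal.toReal_mono
      (ENNReal.add_ne_top.mpr ⟨hne _, hne _⟩) h
    rw [ENNReal.toReal_add (hne _) (hne _), ENNReal.toReal_add (hne _) (hne _)] at h'
    linarith
  -- squeeze
  have Llow : Tendsto (fun z : ℝ => z * (P (S z)).toReal + z * (P (T z)).toReal
      - z * (P (C1 z)).toReal) atTop (nhds (q * a + (1 - q) * b)) := by
    have := (LZZ.add LYY).sub LC1
    simpa using this
  have Lup : Tendsto (fun z : ℝ => z * (P (S z)).toReal + z * (P (T z)).toReal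
      + z * (P (C1 z)).toReal + z * (P (C2 z)).toReal) atTop (nhds (q * a + (1 - q) * b)) := by
    have := ((LZZ.add LYY).add LC1).add LC2
    simpa using this
  refine tendsto_of_tendsto_of_tendsto_of_le_of_le' Llow Lup ?_ ?_
  · filter_upwards [eventually_ge_atTop (0:ℝ)] with z hz
    have := mul_le_mul_of_nonneg_left (hlower z) hz
    calc z * (P (S z)).toReal + z * (P (T z)).toReal - z * (P (C1 z)).toReal
        = z * ((P (S z)).toReal + (P (T z)).toReal - (P (C1 z)).toReal) := by ring
      _ ≤ z * (P (A z)).toReal := this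
  · filter_upwards [eventually_ge_atTop (0:ℝ)] with z hz
    have := mul_le_mul_of_nonneg_left (hupper z) hz
    calc z * (P (A z)).toReal
        ≤ z * ((P (S z)).toReal + (P (T z)).toReal + (P (C1 z)).toReal + (P (C2 z)).toReal) :=
          this
      _ = z * (P (S z)).toReal + z * (P (T z)).toReal + z * (P (C1 z)).toReal
          + z * (P (C2 z)).toReal := by ring
end

section
/- Let 0 < β < 1, q ∈ (0, 1), a ≥ 0, b ≥ 0, and let Z₁, Z₂, Y₁, Y₂ be nonnegative random variables on a probability space such that the pair (Z₁, Z₂) is independent of the pair (Y₁, Y₂), and such that, as z → ∞: z·P(Z_i > z) → 1 for i = 1, 2; z^β·P(Y_i > z) → 1 for i = 1, 2; z·P(Z₁ > z, Z₂ > z) → a; and z^β·P(Y₁ > z, Y₂ > z) → b. Then z^β·P(max{qZ₁, (1−q)Y₁} > z, max{qZ₂, (1−q)Y₂} > z) → (1−q)^β·b as z → ∞. (Thus for β < 1 the tail-dependence of the max-mixture is governed entirely by the Y component: λ̃_U = λ_U^Y.) -/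
open MeasureTheory Filter Real ProbabilityTheory

/-- For `0 < β < 1`, the tail-dependence of the max-mixture `max{q Zᵢ, (1-q) Yᵢ}` is
governed entirely by the `Y` component: its joint exceedance rate satisfies
`z^β P(both > z) → (1-q)^β b`. -/
theorem max_mixture_tail_dependence_beta_lt_one
    {Ω : Type*} [MeasurableSpace Ω] (P : Measure Ω) [IsProbabilityMeasure P]
    (β q a b : ℝ) (hβ : β ∈ Set.Ioo (0 : ℝ) 1) (hq : q ∈ Set.Ioo (0 : ℝ) 1)
    (ha : 0 ≤ a) (hb : 0 ≤ b)
    (Z₁ Z₂ Y₁ Y₂ : Ω → ℝ)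
    (hZ₁m : Measurable Z₁) (hZ₂m : Measurable Z₂) (hY₁m : Measurable Y₁) (hY₂m : Measurable Y₂)
    (hZ₁0 : ∀ ω, 0 ≤ Z₁ ω) (hZ₂0 : ∀ ω, 0 ≤ Z₂ ω) (hY₁0 : ∀ ω, 0 ≤ Y₁ ω) (hY₂0 : ∀ ω, 0 ≤ Y₂ ω)
    (hind : IndepFun (fun ω => (Z₁ ω, Z₂ ω)) (fun ω => (Y₁ ω, Y₂ ω)) P)
    (hZ₁ : Tendsto (fun z : ℝ => z * (P {ω | z < Z₁ ω}).toReal) atTop (nhds 1))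
    (hZ₂ : Tendsto (fun z : ℝ => z * (P {ω | z < Z₂ ω}).toReal) atTop (nhds 1))
    (hY₁ : Tendsto (fun z : ℝ => z ^ β * (P {ω | z < Y₁ ω}).toReal) atTop (nhds 1))
    (hY₂ : Tendsto (fun z : ℝ => z ^ β * (P {ω | z < Y₂ ω}).toReal) atTop (nhds 1))
    (hZJ : Tendsto (fun z : ℝ => z * (P {ω | z < Z₁ ω ∧ z < Z₂ ω}).toReal) atTop (nhds a))
    (hYJ : Tendsto (fun z : ℝ => z ^ β * (P {ω | z < Y₁ ω ∧ z < Y₂ ω}).toReal) atTop (nhds b)) :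
    Tendsto (fun z : ℝ => z ^ β * (P {ω | z < max (q * Z₁ ω) ((1 - q) * Y₁ ω)
        ∧ z < max (q * Z₂ ω) ((1 - q) * Y₂ ω)}).toReal) atTop
      (nhds ((1 - q) ^ β * b)) := by
  obtain ⟨hβ0, hβ1⟩ := hβ
  obtain ⟨hq0, hq1⟩ := hq
  have hc0 : (0:ℝ) < 1 - q := by linarith
  have hdq : Tendsto (fun z : ℝ => z / q) atTop atTop :=
    tendsto_id.atTop_div_const hq0
  have hdc : Tendsto (fun z : ℝ => z / (1 - q)) atTop atTop :=
    tendsto_id.atTop_div_const hc0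
  -- zero-limit helpers
  have hpow : Tendsto (fun z : ℝ => z ^ (β - 1)) atTop (nhds 0) := by
    have h := tendsto_rpow_neg_atTop (y := 1 - β) (by linarith)
    simpa [neg_sub] using h
  have ht1 : Tendsto (fun z : ℝ =>
      z ^ (β - 1) * (q * ((z / q) * (P {ω | z / q < Z₁ ω}).toReal))) atTop (nhds 0) := by
    have h := hpow.mul ((hZ₁.comp hdq).const_mul q)
    simpa using h
  have ht2 : Tendsto (fun z : ℝ =>
      z ^ (β - 1) * (q * ((z / q) * (P {ω | z / q < Z₂ ω}).toReal))) atTop (nhds 0) := by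
    have h := hpow.mul ((hZ₂.comp hdq).const_mul q)
    simpa using h
  have hBlim : Tendsto (fun z : ℝ => (1 - q) ^ β *
      ((z / (1 - q)) ^ β *
        (P {ω | z / (1 - q) < Y₁ ω ∧ z / (1 - q) < Y₂ ω}).toReal)) atTop
      (nhds ((1 - q) ^ β * b)) :=
    (hYJ.comp hdc).const_mul _
  have hupper : Tendsto (fun z : ℝ =>
      (1 - q) ^ β * ((z / (1 - q)) ^ β *
        (P {ω | z / (1 - q) < Y₁ ω ∧ z / (1 - q) < Y₂ ω}).toReal)
      + z ^ (β - 1) * (q * ((z / q) * (P {ω | z / q < Z₁ ω}).toReal))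
      + z ^ (β - 1) * (q * ((z / q) * (P {ω | z / q < Z₂ ω}).toReal))) atTop
      (nhds ((1 - q) ^ β * b)) := by
    have h := (hBlim.add ht1).add ht2
    simpa using h
  refine tendsto_of_tendsto_of_tendsto_of_le_of_le' hBlim hupper ?_ ?_
  · -- lower bound
    filter_upwards [eventually_gt_atTop (0 : ℝ)] with z hz
    have hfac : (1 - q) ^ β * (z / (1 - q)) ^ β = z ^ β := by
      rw [← Real.mul_rpow hc0.le (div_nonneg hz.le hc0.le),
        mul_div_cancel₀ _ hc0.ne']
    have hsub : {ω | z / (1 - q) < Y₁ ω ∧ z / (1 - q) < Y₂ ω} ⊆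
        {ω | z < max (q * Z₁ ω) ((1 - q) * Y₁ ω)
          ∧ z < max (q * Z₂ ω) ((1 - q) * Y₂ ω)} := by
      rintro ω ⟨h1, h2⟩
      constructor
      · exact lt_max_of_lt_right (by rw [mul_comm]; exact (div_lt_iff₀ hc0).mp h1)
      · exact lt_max_of_lt_right (by rw [mul_comm]; exact (div_lt_iff₀ hc0).mp h2)
    calc (1 - q) ^ β * ((z / (1 - q)) ^ β *
          (P {ω | z / (1 - q) < Y₁ ω ∧ z / (1 - q) < Y₂ ω}).toReal)
        = z ^ β * (P {ω | z / (1 - q) < Y₁ ω ∧ z / (1 - q) < Y₂ ω}).toReal := by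
          rw [← mul_assoc, hfac]
      _ ≤ z ^ β * (P {ω | z < max (q * Z₁ ω) ((1 - q) * Y₁ ω)
            ∧ z < max (q * Z₂ ω) ((1 - q) * Y₂ ω)}).toReal := by
          refine mul_le_mul_of_nonneg_left ?_ (Real.rpow_nonneg hz.le β)
          exact ENNReal.toReal_mono (measure_ne_top P _) (measure_mono hsub)
  · -- upper bound
    filter_upwards [eventually_gt_atTop (0 : ℝ)] with z hz
    have hfac : (1 - q) ^ β * (z / (1 - q)) ^ β = z ^ β := by
      rw [← Real.mul_rpow hc0.le (div_nonneg hz.le hc0.le),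
        mul_div_cancel₀ _ hc0.ne']
    have hq' : q * (z / q) = z := mul_div_cancel₀ _ hq0.ne'
    have hzpow : z ^ (β - 1) * z = z ^ β := by
      conv_rhs => rw [show β = β - 1 + 1 by ring]
      rw [Real.rpow_add hz, Real.rpow_one]
    have hsub : {ω | z < max (q * Z₁ ω) ((1 - q) * Y₁ ω)
          ∧ z < max (q * Z₂ ω) ((1 - q) * Y₂ ω)} ⊆
        {ω | z / (1 - q) < Y₁ ω ∧ z / (1 - q) < Y₂ ω}
          ∪ ({ω | z / q < Z₁ ω} ∪ {ω | z / q < Z₂ ω}) := by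
      rintro ω ⟨h1, h2⟩
      by_cases hA1 : z / q < Z₁ ω
      · exact Or.inr (Or.inl hA1)
      by_cases hA2 : z / q < Z₂ ω
      · exact Or.inr (Or.inr hA2)
      left
      have hY1 : z < (1 - q) * Y₁ ω := by
        rcases lt_max_iff.mp h1 with h | h
        · exact absurd ((div_lt_iff₀' hq0).mpr h) hA1
        · exact h
      have hY2 : z < (1 - q) * Y₂ ω := by
        rcases lt_max_iff.mp h2 with h | h
        · exact absurd ((div_lt_iff₀' hq0).mpr h) hA2
        · exact h
      exact ⟨(div_lt_iff₀' hc0).mpr hY1, (div_lt_iff₀' hc0).mpr hY2⟩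
    have hPle : (P {ω | z < max (q * Z₁ ω) ((1 - q) * Y₁ ω)
          ∧ z < max (q * Z₂ ω) ((1 - q) * Y₂ ω)}).toReal ≤
        (P {ω | z / (1 - q) < Y₁ ω ∧ z / (1 - q) < Y₂ ω}).toReal
          + (P {ω | z / q < Z₁ ω}).toReal + (P {ω | z / q < Z₂ ω}).toReal := by
      have h1 : P {ω | z < max (q * Z₁ ω) ((1 - q) * Y₁ ω)
            ∧ z < max (q * Z₂ ω) ((1 - q) * Y₂ ω)} ≤
          P {ω | z / (1 - q) < Y₁ ω ∧ z / (1 - q) < Y₂ ω}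
            + (P {ω | z / q < Z₁ ω} + P {ω | z / q < Z₂ ω}) :=
        le_trans (measure_mono hsub)
          (le_trans (measure_union_le _ _)
            (add_le_add_right (measure_union_le _ _) _))
      calc (P {ω | z < max (q * Z₁ ω) ((1 - q) * Y₁ ω)
            ∧ z < max (q * Z₂ ω) ((1 - q) * Y₂ ω)}).toReal
          ≤ (P {ω | z / (1 - q) < Y₁ ω ∧ z / (1 - q) < Y₂ ω}
              + (P {ω | z / q < Z₁ ω} + P {ω | z / q < Z₂ ω})).toReal :=
            ENNReal.toReal_mono
              (by
                refine ENNReal.add_ne_top.mpr ⟨measure_ne_top P _, ?_⟩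
                exact ENNReal.add_ne_top.mpr ⟨measure_ne_top P _, measure_ne_top P _⟩) h1
        _ = (P {ω | z / (1 - q) < Y₁ ω ∧ z / (1 - q) < Y₂ ω}).toReal
              + (P {ω | z / q < Z₁ ω}).toReal + (P {ω | z / q < Z₂ ω}).toReal := by
            rw [ENNReal.toReal_add (measure_ne_top P _)
              (ENNReal.add_ne_top.mpr ⟨measure_ne_top P _, measure_ne_top P _⟩),
              ENNReal.toReal_add (measure_ne_top P _) (measure_ne_top P _), add_assoc]
    calc z ^ β * (P {ω | z < max (q * Z₁ ω) ((1 - q) * Y₁ ω)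
          ∧ z < max (q * Z₂ ω) ((1 - q) * Y₂ ω)}).toReal
        ≤ z ^ β * ((P {ω | z / (1 - q) < Y₁ ω ∧ z / (1 - q) < Y₂ ω}).toReal
            + (P {ω | z / q < Z₁ ω}).toReal + (P {ω | z / q < Z₂ ω}).toReal) :=
          mul_le_mul_of_nonneg_left hPle (Real.rpow_nonneg hz.le β)
      _ = (1 - q) ^ β * ((z / (1 - q)) ^ β *
            (P {ω | z / (1 - q) < Y₁ ω ∧ z / (1 - q) < Y₂ ω}).toReal)
          + z ^ (β - 1) * (q * ((z / q) * (P {ω | z / q < Z₁ ω}).toReal))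
          + z ^ (β - 1) * (q * ((z / q) * (P {ω | z / q < Z₂ ω}).toReal)) := by
          rw [← mul_assoc, hfac]
          have e1 : z ^ (β - 1) * (q * ((z / q) * (P {ω | z / q < Z₁ ω}).toReal))
              = z ^ β * (P {ω | z / q < Z₁ ω}).toReal := by
            rw [← mul_assoc q, hq', ← mul_assoc, hzpow]
          have e2 : z ^ (β - 1) * (q * ((z / q) * (P {ω | z / q < Z₂ ω}).toReal))
              = z ^ β * (P {ω | z / q < Z₂ ω}).toReal := by
            rw [← mul_assoc q, hq', ← mul_assoc, hzpow]
          rw [e1, e2]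
          ring
end

section
/- Fix s₁, s₂ ∈ ℝ² with ‖s₁ − s₂‖ = h > 0, and let μ be a probability measure on (0,∞)² (the law of the pair of radii (r₁, r₂)). For (r₁, r₂) ∈ (0,∞)², let A₁₂(r₁, r₂; h) be the Lebesgue area of B(s₁, r₁) ∩ B(s₂, r₂), set δ_i = A₁₂(r₁, r₂; h)/(π r_i²) and x_i = π r_i² − A₁₂(r₁, r₂; h) for i = 1, 2, and define F₁₂(z₁, z₂) = ∫ exp(−x₁/(π r₁² z₁) − x₂/(π r₂² z₂) − A₁₂(r₁, r₂; h)·max{1/(π r₁² z₁), 1/(π r₂² z₂)}) dμ(r₁, r₂). Then for all u₁, u₂ ∈ (0, 1), F₁₂(−1/log u₁, −1/log u₂) = ∫ u₁^{1−δ₁}·u₂^{1−δ₂}·min{u₁^{δ₁}, u₂^{δ₂}} dμ(r₁, r₂); i.e. the copula of the simplified max-convolution process is the mixture of Marshall–Olkin copulas given in equation (eq-copcdf) of the paper. -/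
open MeasureTheory Metric Real

/-- The overlap area `A₁₂` of the two disks of radii `r₁, r₂` centered at `s₁, s₂`. -/
noncomputable def A12 (s₁ s₂ : EuclideanSpace ℝ (Fin 2)) (r₁ r₂ : ℝ) : ℝ :=
  (volume (ball s₁ r₁ ∩ ball s₂ r₂)).toReal

/-- The copula of the simplified max-convolution process is the mixture of
Marshall–Olkin copulas: evaluating the bivariate cdf `F₁₂` at the Fréchet quantiles
`-1/log uᵢ` gives `∫ u₁^{1-δ₁} u₂^{1-δ₂} min{u₁^{δ₁}, u₂^{δ₂}} dμ`. -/
theorem max_convolution_copula_is_MO_mixture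
    (s₁ s₂ : EuclideanSpace ℝ (Fin 2)) (h : ℝ) (hd : dist s₁ s₂ = h) (hh : 0 < h)
    (μ : Measure (ℝ × ℝ)) [IsProbabilityMeasure μ]
    (hsupp : ∀ᵐ p ∂μ, 0 < p.1 ∧ 0 < p.2)
    (F : ℝ → ℝ → ℝ)
    (hF : ∀ z₁ z₂ : ℝ, F z₁ z₂ = ∫ p : ℝ × ℝ,
      Real.exp (-(π * p.1 ^ 2 - A12 s₁ s₂ p.1 p.2) / (π * p.1 ^ 2 * z₁)
        - (π * p.2 ^ 2 - A12 s₁ s₂ p.1 p.2) / (π * p.2 ^ 2 * z₂)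
        - A12 s₁ s₂ p.1 p.2 * max (1 / (π * p.1 ^ 2 * z₁)) (1 / (π * p.2 ^ 2 * z₂))) ∂μ)
    (u₁ u₂ : ℝ) (hu1 : u₁ ∈ Set.Ioo (0 : ℝ) 1) (hu2 : u₂ ∈ Set.Ioo (0 : ℝ) 1) :
    F (-1 / Real.log u₁) (-1 / Real.log u₂)
      = ∫ p : ℝ × ℝ,
          u₁ ^ (1 - A12 s₁ s₂ p.1 p.2 / (π * p.1 ^ 2))
            * u₂ ^ (1 - A12 s₁ s₂ p.1 p.2 / (π * p.2 ^ 2))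
            * min (u₁ ^ (A12 s₁ s₂ p.1 p.2 / (π * p.1 ^ 2)))
                (u₂ ^ (A12 s₁ s₂ p.1 p.2 / (π * p.2 ^ 2))) ∂μ := by
  rw [hF]
  refine integral_congr_ae ?_
  filter_upwards [hsupp] with p hp
  obtain ⟨h1, h2⟩ := hp
  set a := A12 s₁ s₂ p.1 p.2 with ha
  have ha0 : 0 ≤ a := ENNReal.toReal_nonneg
  have hP1 : (0:ℝ) < π * p.1 ^ 2 := by positivity
  have hP2 : (0:ℝ) < π * p.2 ^ 2 := by positivity
  have hL1 : Real.log u₁ ≠ 0 := ne_of_lt (Real.log_neg hu1.1 hu1.2)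
  have hL2 : Real.log u₂ ≠ 0 := ne_of_lt (Real.log_neg hu2.1 hu2.2)
  have e1 : 1 / (π * p.1 ^ 2 * (-1 / Real.log u₁)) = -(Real.log u₁ / (π * p.1 ^ 2)) := by
    field_simp
  have e2 : 1 / (π * p.2 ^ 2 * (-1 / Real.log u₂)) = -(Real.log u₂ / (π * p.2 ^ 2)) := by
    field_simp
  have key : -(π * p.1 ^ 2 - a) / (π * p.1 ^ 2 * (-1 / Real.log u₁))
      - (π * p.2 ^ 2 - a) / (π * p.2 ^ 2 * (-1 / Real.log u₂))
      - a * max (1 / (π * p.1 ^ 2 * (-1 / Real.log u₁)))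
          (1 / (π * p.2 ^ 2 * (-1 / Real.log u₂)))
      = Real.log u₁ * (1 - a / (π * p.1 ^ 2)) + Real.log u₂ * (1 - a / (π * p.2 ^ 2))
        + min (Real.log u₁ * (a / (π * p.1 ^ 2))) (Real.log u₂ * (a / (π * p.2 ^ 2))) := by
    rw [e1, e2, max_neg_neg, mul_neg, sub_neg_eq_add]
    have hmin : a * min (Real.log u₁ / (π * p.1 ^ 2)) (Real.log u₂ / (π * p.2 ^ 2))
        = min (Real.log u₁ * (a / (π * p.1 ^ 2))) (Real.log u₂ * (a / (π * p.2 ^ 2))) := by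
      rw [mul_min_of_nonneg _ _ ha0]
      congr 1 <;> ring
    rw [hmin]
    have : -(π * p.1 ^ 2 - a) / (π * p.1 ^ 2 * (-1 / Real.log u₁))
        - (π * p.2 ^ 2 - a) / (π * p.2 ^ 2 * (-1 / Real.log u₂))
        = Real.log u₁ * (1 - a / (π * p.1 ^ 2)) + Real.log u₂ * (1 - a / (π * p.2 ^ 2)) := by
      field_simp
      ring
    rw [this]
  rw [key, Real.rpow_def_of_pos hu1.1, Real.rpow_def_of_pos hu2.1,
    Real.rpow_def_of_pos hu1.1, Real.rpow_def_of_pos hu2.1,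
    ← Real.exp_monotone.map_min, ← Real.exp_add, ← Real.exp_add]
end

section
/- Let μ be a probability measure on a measurable space and let m be a measurable function with 0 ≤ m ≤ 1 μ-almost everywhere, and let m* denote the μ-essential supremum of m. Then lim_{u→0⁺} log(∫ u^{2−m} dμ)/log u = 2 − m*. (Hence the diagonal C(u, u) = ∫ u^{2−min{δ₁,δ₂}} dμ of the copula of the simplified max-convolution process has lower tail order κ_L = 2 − ess sup min{δ₁, δ₂}, giving intermediate lower tail dependence with κ_L ∈ (1, 2) when 0 < ess sup min{δ₁, δ₂} < 1.) -/
open MeasureTheory Filter Real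

/-- The lower tail order of the mixture copula with diagonal `C(u,u) = ∫ u^{2-m} dμ` is
`κ_L = 2 - ess sup m`: one has `log (∫ u^{2-m} dμ) / log u → 2 - ess sup m` as `u → 0⁺`. -/
theorem mixture_copula_lower_tail_order
    {α : Type*} [MeasurableSpace α] (μ : Measure α) [IsProbabilityMeasure μ]
    (m : α → ℝ) (hm : Measurable m) (h01 : ∀ᵐ x ∂μ, 0 ≤ m x ∧ m x ≤ 1) :
    Tendsto (fun u : ℝ => Real.log (∫ x, u ^ (2 - m x) ∂μ) / Real.log u)
      (nhdsWithin 0 (Set.Ioi 0)) (nhds (2 - essSup m μ)) := by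
  set L := essSup m μ with hLdef
  have hne : (MeasureTheory.ae μ).NeBot := ae_neBot.2 (IsProbabilityMeasure.ne_zero μ)
  have hbdd : IsBoundedUnder (· ≤ ·) (MeasureTheory.ae μ) m :=
    ⟨1, Filter.eventually_map.2 (h01.mono fun x h => h.2)⟩
  have hcobdd : IsCoboundedUnder (· ≤ ·) (MeasureTheory.ae μ) m :=
    isCoboundedUnder_le_of_eventually_le _ (h01.mono fun x h => h.1)
  have hmle : ∀ᵐ x ∂μ, m x ≤ L := ae_le_essSup hbdd
  -- integrability
  have hint : ∀ u : ℝ, u ∈ Set.Ioo (0:ℝ) 1 → Integrable (fun x => u ^ (2 - m x)) μ := by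
    intro u hu
    have hmeas : Measurable (fun x => u ^ (2 - m x)) := by
      have : (fun x => u ^ (2 - m x)) = fun x => Real.exp ((2 - m x) * Real.log u) := by
        funext x; rw [Real.rpow_def_of_pos hu.1, mul_comm]
      rw [this]
      exact Real.measurable_exp.comp ((measurable_const.sub hm).mul_const _)
    refine Integrable.mono' (integrable_const 1) hmeas.aestronglyMeasurable ?_
    filter_upwards [h01] with x hx
    rw [Real.norm_of_nonneg (Real.rpow_nonneg hu.1.le _)]
    exact Real.rpow_le_one hu.1.le hu.2.le (by linarith [hx.2])
  -- lower bound on the integral: u^2 ≤ I u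
  have hIlow : ∀ u : ℝ, u ∈ Set.Ioo (0:ℝ) 1 → u ^ (2:ℝ) ≤ ∫ x, u ^ (2 - m x) ∂μ := by
    intro u hu
    have : (u:ℝ) ^ (2:ℝ) = ∫ _x, u ^ (2:ℝ) ∂μ := by simp
    rw [this]
    refine integral_mono_ae (integrable_const _) (hint u hu) ?_
    filter_upwards [h01] with x hx
    exact Real.rpow_le_rpow_of_exponent_ge hu.1 hu.2.le (by linarith [hx.1])
  have hIpos : ∀ u : ℝ, u ∈ Set.Ioo (0:ℝ) 1 → 0 < ∫ x, u ^ (2 - m x) ∂μ := fun u hu =>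
    lt_of_lt_of_le (Real.rpow_pos_of_pos hu.1 2) (hIlow u hu)
  -- upper bound on the integral: I u ≤ u^(2-L)
  have hIup : ∀ u : ℝ, u ∈ Set.Ioo (0:ℝ) 1 → (∫ x, u ^ (2 - m x) ∂μ) ≤ u ^ (2 - L) := by
    intro u hu
    have : (u:ℝ) ^ (2 - L) = ∫ _x, u ^ (2 - L) ∂μ := by simp
    rw [this]
    refine integral_mono_ae (hint u hu) (integrable_const _) ?_
    filter_upwards [hmle] with x hx
    exact Real.rpow_le_rpow_of_exponent_ge hu.1 hu.2.le (by linarith)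
  -- lower bound gives f u ≥ 2 - L on (0,1)
  have hflow : ∀ u : ℝ, u ∈ Set.Ioo (0:ℝ) 1 →
      2 - L ≤ Real.log (∫ x, u ^ (2 - m x) ∂μ) / Real.log u := by
    intro u hu
    have hlogu : Real.log u < 0 := Real.log_neg hu.1 hu.2
    rw [le_div_iff_of_neg hlogu]
    calc Real.log (∫ x, u ^ (2 - m x) ∂μ) ≤ Real.log (u ^ (2 - L)) :=
          Real.log_le_log (hIpos u hu) (hIup u hu)
      _ = (2 - L) * Real.log u := Real.log_rpow hu.1 _
  refine tendsto_order.2 ⟨?_, ?_⟩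
  · intro a ha
    filter_upwards [Ioo_mem_nhdsGT_of_mem (Set.left_mem_Ico.2 one_pos)] with u hu
    exact lt_of_lt_of_le ha (hflow u hu)
  · intro a ha
    set ε : ℝ := (a - (2 - L)) / 2 with hεdef
    have hε : 0 < ε := by simp only [hεdef]; linarith
    -- the set where m > L - ε has positive measure
    set A : Set α := {x | L - ε < m x} with hAdef
    have hA : MeasurableSet A := measurableSet_lt measurable_const hm
    have hApos : 0 < μ A := by
      rcases eq_or_lt_of_le (zero_le : (0:ENNReal) ≤ μ A) with h0 | h0
      · exfalso
        have hae : ∀ᵐ x ∂μ, m x ≤ L - ε := by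
          rw [ae_iff]
          convert h0.symm using 2
          ext x
          simp [A, not_le]
        have : L ≤ L - ε := limsup_le_of_le hcobdd hae
        linarith
      · exact h0
    set c : ℝ := (μ A).toReal with hcdef
    have hcpos : 0 < c := ENNReal.toReal_pos hApos.ne' (measure_ne_top μ A)
    -- integral lower bound via A
    have hIlow2 : ∀ u : ℝ, u ∈ Set.Ioo (0:ℝ) 1 →
        u ^ (2 - (L - ε)) * c ≤ ∫ x, u ^ (2 - m x) ∂μ := by
      intro u hu
      have h1 : ∫ x, A.indicator (fun _ => u ^ (2 - (L - ε))) x ∂μ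
          = u ^ (2 - (L - ε)) * c := by
        rw [integral_indicator_const _ hA]
        simp [hcdef, mul_comm, Measure.real]
      rw [← h1]
      refine integral_mono_ae ((integrable_const _).indicator hA) (hint u hu) ?_
      refine Filter.Eventually.of_forall fun x => ?_
      by_cases hx : x ∈ A
      · rw [Set.indicator_of_mem hx]
        exact Real.rpow_le_rpow_of_exponent_ge hu.1 hu.2.le (by have := hx; simp only [A, Set.mem_setOf_eq] at this; linarith)
      · rw [Set.indicator_of_notMem hx]
        exact Real.rpow_nonneg hu.1.le _
    -- upper bound on f u
    have hfup : ∀ u : ℝ, u ∈ Set.Ioo (0:ℝ) 1 →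
        Real.log (∫ x, u ^ (2 - m x) ∂μ) / Real.log u
          ≤ (2 - (L - ε)) + Real.log c / Real.log u := by
      intro u hu
      have hlogu : Real.log u < 0 := Real.log_neg hu.1 hu.2
      rw [div_le_iff_of_neg hlogu, add_mul, div_mul_cancel₀ _ hlogu.ne]
      calc (2 - (L - ε)) * Real.log u + Real.log c
          = Real.log (u ^ (2 - (L - ε)) * c) := by
            rw [Real.log_mul (Real.rpow_pos_of_pos hu.1 _).ne' hcpos.ne',
              Real.log_rpow hu.1]
        _ ≤ Real.log (∫ x, u ^ (2 - m x) ∂μ) :=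
            Real.log_le_log (mul_pos (Real.rpow_pos_of_pos hu.1 _) hcpos) (hIlow2 u hu)
    -- log c / log u → 0
    have htend : Tendsto (fun u : ℝ => Real.log c / Real.log u)
        (nhdsWithin 0 (Set.Ioi 0)) (nhds 0) := by
      have h1 : Tendsto (fun u : ℝ => -Real.log u) (nhdsWithin 0 (Set.Ioi 0)) atTop :=
        tendsto_neg_atBot_atTop.comp Real.tendsto_log_nhdsGT_zero
      have h2 : Tendsto (fun u : ℝ => (-Real.log u)⁻¹) (nhdsWithin 0 (Set.Ioi 0)) (nhds 0) :=
        h1.inv_tendsto_atTop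
      have h3 : Tendsto (fun u : ℝ => Real.log c * -(-Real.log u)⁻¹)
          (nhdsWithin 0 (Set.Ioi 0)) (nhds (Real.log c * -0)) :=
        tendsto_const_nhds.mul h2.neg
      simp only [neg_zero, mul_zero] at h3
      convert h3 using 2 with u
      rw [div_eq_mul_inv, inv_neg, neg_neg]
    have hev : ∀ᶠ u in nhdsWithin (0:ℝ) (Set.Ioi 0), Real.log c / Real.log u < ε :=
      htend.eventually_lt_const hε
    filter_upwards [Ioo_mem_nhdsGT_of_mem (Set.left_mem_Ico.2 one_pos), hev] with u hu hu2
    have := hfup u hu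
    have : Real.log (∫ x, u ^ (2 - m x) ∂μ) / Real.log u < (2 - (L - ε)) + ε := by linarith
    calc Real.log (∫ x, u ^ (2 - m x) ∂μ) / Real.log u < (2 - (L - ε)) + ε := this
      _ = a := by simp only [hεdef]; ring
end
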